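/- arXiv:1904.02550 — 4 statements merged into one kernel-verified Lean document; each statement's English description precedes it below -/
import Mathlib

section
/- For any prime p > 3, the sum over k from 0 to p-1 of k times (1/(p+1))_k^{p+1} / (k!)^{p+1} is congruent to p^3/4 modulo p^4, where (x)_k denotes the Pochhammer symbol x(x+1)···(x+k-1). -/
/-- The Pochhammer symbol `(x)_k = x(x+1)⋯(x+k-1)` for rational `x`. -/
def pochQ (x : ℚ) (k : ℕ) : ℚ := ∏ j ∈ Finset.range k, (x + j)

open Finset

section Defs
variable (p : ℕ) [hp : Fact p.Prime]

private noncomputable def aF (i : ℕ) : ℚ_[p] := 1 - (p:ℚ_[p])/(((p:ℚ_[p])+1)*((i:ℚ_[p])+1))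
private noncomputable def cF (i : ℕ) : ℚ_[p] := 1/(2*((p:ℚ_[p])+1)*((i:ℚ_[p])+1)^2)
private noncomputable def bF (i : ℕ) : ℚ_[p] := 1 - (p:ℚ_[p])/((i:ℚ_[p])+1) + (p:ℚ_[p])^3 * cF p i
private noncomputable def eF (k : ℕ) : ℚ_[p] := ∏ i ∈ Finset.range k, (1 - (p:ℚ_[p])/((i:ℚ_[p])+1))

end Defs

section Norms
variable {p : ℕ} [hp : Fact p.Prime]

private lemma norm_nat_eq_one {n : ℕ} (h0 : 0 < n) (h1 : n < p) : ‖(n : ℚ_[p])‖ = 1 := by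
  have hd : ¬ (p:ℤ) ∣ (n:ℤ) := by
    rw [Int.natCast_dvd_natCast]
    intro hdvd
    exact absurd (Nat.le_of_dvd h0 hdvd) (by omega)
  have h2 := (Padic.norm_intCast_lt_one_iff (p := p) (k := (n:ℤ))).not.mpr hd
  have hle := Padic.norm_int_le_one (p := p) (n:ℤ)
  push_cast at h2 hle
  exact le_antisymm hle (not_lt.mp h2)

private lemma nsucc {i : ℕ} (h : i + 1 < p) : ‖((i:ℚ_[p])+1)‖ = 1 := by
  have := norm_nat_eq_one (p := p) (n := i+1) (by omega) h
  push_cast at this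
  exact this

private lemma nsucc_ne {i : ℕ} (h : i + 1 < p) : ((i:ℚ_[p])+1) ≠ 0 := by
  intro hc
  have := nsucc (p := p) h
  rw [hc, norm_zero] at this
  norm_num at this

private lemma nq (hp3 : 3 < p) : ‖((p:ℚ_[p])+1)‖ = 1 := by
  have hd : ¬ (p:ℤ) ∣ ((p:ℤ)+1) := by
    intro hdvd
    have : (p:ℤ) ∣ 1 := (dvd_add_right dvd_rfl).mp hdvd
    have := Int.le_of_dvd one_pos this
    omega
  have h2 := (Padic.norm_intCast_lt_one_iff (p := p) (k := (p:ℤ)+1)).not.mpr hd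
  have hle := Padic.norm_int_le_one (p := p) ((p:ℤ)+1)
  push_cast at h2 hle
  exact le_antisymm hle (not_lt.mp h2)

private lemma nq_ne (hp3 : 3 < p) : ((p:ℚ_[p])+1) ≠ 0 := by
  intro hc
  have := nq (p := p) hp3
  rw [hc, norm_zero] at this
  norm_num at this

private lemma n2 (hp3 : 3 < p) : ‖(2:ℚ_[p])‖ = 1 := by
  have := norm_nat_eq_one (p := p) (n := 2) (by omega) (by omega)
  push_cast at this
  exact this

private lemma norm_cF (hp3 : 3 < p) {i : ℕ} (hi : i + 1 < p) : ‖cF p i‖ ≤ 1 := by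
  rw [cF, one_div, norm_inv, norm_mul, norm_mul, norm_pow, n2 hp3, nq hp3, nsucc hi]
  norm_num

private lemma norm_v {i : ℕ} (hi : i + 1 < p) : ‖(p:ℚ_[p])/((i:ℚ_[p])+1)‖ = (p:ℝ)⁻¹ := by
  rw [norm_div, Padic.norm_p, nsucc hi, div_one]

private lemma norm_x (hp3 : 3 < p) {i : ℕ} (hi : i + 1 < p) :
    ‖(p:ℚ_[p])/(((p:ℚ_[p])+1)*((i:ℚ_[p])+1))‖ = (p:ℝ)⁻¹ := by
  rw [norm_div, Padic.norm_p, norm_mul, nq hp3, nsucc hi]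
  norm_num

private lemma pinv_le_one : (p:ℝ)⁻¹ ≤ 1 := by
  have h1 : (1:ℝ) ≤ (p:ℝ) := by exact_mod_cast hp.out.one_lt.le
  rw [inv_le_one_iff₀]
  right; exact h1

private lemma norm_bF (hp3 : 3 < p) {i : ℕ} (hi : i + 1 < p) : ‖bF p i‖ ≤ 1 := by
  rw [bF]
  refine le_trans (Padic.nonarchimedean _ _) (max_le ?_ ?_)
  · rw [sub_eq_add_neg]
    refine le_trans (Padic.nonarchimedean _ _) (max_le (by norm_num) ?_)
    rw [norm_neg, norm_v hi]; exact pinv_le_one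
  · rw [norm_mul, norm_pow, Padic.norm_p]
    calc (p:ℝ)⁻¹^3 * ‖cF p i‖ ≤ 1^3 * 1 := by
          refine mul_le_mul (pow_le_pow_left₀ (by positivity) pinv_le_one 3)
            (norm_cF hp3 hi) (norm_nonneg _) (by norm_num)
      _ = 1 := by norm_num

private lemma norm_aF (hp3 : 3 < p) {i : ℕ} (hi : i + 1 < p) : ‖aF p i‖ ≤ 1 := by
  rw [aF, sub_eq_add_neg]
  refine le_trans (Padic.nonarchimedean _ _) (max_le (by norm_num) ?_)
  rw [norm_neg, norm_x hp3 hi]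
  exact pinv_le_one

private lemma cong_trans {x y z : ℚ_[p]} {ε : ℝ} (h1 : ‖x - y‖ ≤ ε) (h2 : ‖y - z‖ ≤ ε) :
    ‖x - z‖ ≤ ε := by
  have h : x - z = (x - y) + (y - z) := by ring
  rw [h]
  exact le_trans (Padic.nonarchimedean _ _) (max_le h1 h2)

private lemma cong_sum {ι : Type*} {s : Finset ι} {f g : ι → ℚ_[p]} {ε : ℝ} (hε : 0 ≤ ε)
    (h : ∀ i ∈ s, ‖f i - g i‖ ≤ ε) : ‖∑ i ∈ s, f i - ∑ i ∈ s, g i‖ ≤ ε := by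
  rw [← Finset.sum_sub_distrib]
  exact IsUltrametricDist.norm_sum_le_of_forall_le_of_nonneg hε h

private lemma cong_mul {a b c d : ℚ_[p]} {ε : ℝ} (ha : ‖a‖ ≤ 1) (hd : ‖d‖ ≤ 1)
    (h1 : ‖a - b‖ ≤ ε) (h2 : ‖c - d‖ ≤ ε) : ‖a * c - b * d‖ ≤ ε := by
  have h : a * c - b * d = a * (c - d) + (a - b) * d := by ring
  rw [h]
  refine le_trans (Padic.nonarchimedean _ _) (max_le ?_ ?_)
  · rw [norm_mul]
    calc ‖a‖ * ‖c - d‖ ≤ 1 * ε := mul_le_mul ha h2 (norm_nonneg _) zero_le_one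
      _ = ε := one_mul ε
  · rw [norm_mul]
    calc ‖a - b‖ * ‖d‖ ≤ ε * 1 :=
          mul_le_mul h1 hd (norm_nonneg _) (le_trans (norm_nonneg _) h1)
      _ = ε := mul_one ε

end Norms

section Binom
variable {p : ℕ} [hp : Fact p.Prime]

private lemma norm_nat_le_inv {n : ℕ} (h : p ∣ n) : ‖(n : ℚ_[p])‖ ≤ (p:ℝ)⁻¹ := by
  obtain ⟨c, rfl⟩ := h
  push_cast
  rw [norm_mul, Padic.norm_p]
  have hc : ‖(c : ℚ_[p])‖ ≤ 1 := by
    have := Padic.norm_int_le_one (p := p) (c:ℤ)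
    push_cast at this
    exact this
  calc (p:ℝ)⁻¹ * ‖(c : ℚ_[p])‖ ≤ (p:ℝ)⁻¹ * 1 := by
        exact mul_le_mul_of_nonneg_left hc (by positivity)
    _ = (p:ℝ)⁻¹ := mul_one _

private lemma dvd_choose3 (hp3 : 3 < p) : p ∣ (p+1).choose 3 := by
  have h : (p+1).choose 3 = p.choose 2 + p.choose 3 := Nat.choose_succ_succ p 2
  rw [h]
  exact dvd_add (hp.out.dvd_choose_self (by omega) (by omega))
    (hp.out.dvd_choose_self (by omega) (by omega))

private lemma choose2_cast : (((p+1).choose 2 : ℚ_[p])) * 2 = ((p:ℚ_[p])+1) * p := by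
  have h : (p+1).choose 2 * 2 = (p+1) * p := by
    rw [Nat.choose_two_right, Nat.add_sub_cancel]
    have h2 : 2 ∣ (p+1) * p := by
      have h3 := Nat.even_mul_succ_self p
      rw [Nat.mul_comm]
      exact h3.two_dvd
    exact Nat.div_mul_cancel h2
  exact_mod_cast h

private lemma factor_cong (hp3 : 3 < p) {i : ℕ} (hi : i + 1 < p) :
    ‖aF p i ^ (p+1) - bF p i‖ ≤ ((p:ℝ)⁻¹)^4 := by
  set x : ℚ_[p] := -((p:ℚ_[p])/(((p:ℚ_[p])+1)*((i:ℚ_[p])+1))) with hxdef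
  have hxnorm : ‖x‖ = (p:ℝ)⁻¹ := by rw [hxdef, norm_neg, norm_x hp3 hi]
  have hb : aF p i = x + 1 := by rw [aF, hxdef]; ring
  rw [hb, add_pow]
  simp only [one_pow, mul_one]
  rw [range_eq_Ico, ← Finset.sum_Ico_consecutive _ (by omega : (0:ℕ) ≤ 3) (by omega : 3 ≤ p+1+1),
    ← range_eq_Ico]
  have hhead : (∑ m ∈ range 3, x ^ m * ((p+1).choose m : ℚ_[p])) = bF p i := by
    rw [Finset.sum_range_succ, Finset.sum_range_succ, Finset.sum_range_one]
    rw [Nat.choose_zero_right, Nat.choose_one_right]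
    have hq : ((p:ℚ_[p])+1) ≠ 0 := nq_ne hp3
    have hs : ((i:ℚ_[p])+1) ≠ 0 := nsucc_ne hi
    have h2 : (2:ℚ_[p]) ≠ 0 := two_ne_zero
    have hc2' : (((p+1).choose 2 : ℚ_[p])) = ((p:ℚ_[p])+1)*(p:ℚ_[p])/2 := by
      rw [eq_div_iff h2]; exact choose2_cast
    rw [bF, cF, hxdef]
    push_cast
    rw [hc2']
    field_simp
    ring
  rw [hhead, add_sub_cancel_left]
  refine IsUltrametricDist.norm_sum_le_of_forall_le_of_nonneg (by positivity) ?_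
  intro m hm
  rw [mem_Ico] at hm
  rw [norm_mul, norm_pow, hxnorm]
  rcases eq_or_lt_of_le hm.1 with h3 | h4
  · -- m = 3
    rw [← h3]
    calc ((p:ℝ)⁻¹)^3 * ‖((p+1).choose 3 : ℚ_[p])‖ ≤ ((p:ℝ)⁻¹)^3 * (p:ℝ)⁻¹ :=
          mul_le_mul_of_nonneg_left (norm_nat_le_inv (dvd_choose3 hp3)) (by positivity)
      _ = ((p:ℝ)⁻¹)^4 := by ring
  · -- 4 ≤ m
    have hcle : ‖((p+1).choose m : ℚ_[p])‖ ≤ 1 := by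
      have := Padic.norm_int_le_one (p := p) ((p+1).choose m : ℤ)
      push_cast at this
      exact this
    calc ((p:ℝ)⁻¹)^m * ‖((p+1).choose m : ℚ_[p])‖ ≤ ((p:ℝ)⁻¹)^m * 1 :=
          mul_le_mul_of_nonneg_left hcle (by positivity)
      _ = ((p:ℝ)⁻¹)^m := mul_one _
      _ ≤ ((p:ℝ)⁻¹)^4 := pow_le_pow_of_le_one (by positivity) (pinv_le_one) (by omega)

end Binom

section Prod
variable {p : ℕ} [hp : Fact p.Prime]

private lemma norm_eF_factor {i : ℕ} (hi : i + 1 < p) :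
    ‖1 - (p:ℚ_[p])/((i:ℚ_[p])+1)‖ ≤ 1 := by
  rw [sub_eq_add_neg]
  refine le_trans (Padic.nonarchimedean _ _) (max_le (by norm_num) ?_)
  rw [norm_neg, norm_v hi]
  exact pinv_le_one

private lemma norm_eF (k : ℕ) (hk : k < p) : ‖eF p k‖ ≤ 1 := by
  rw [eF, norm_prod]
  refine Finset.prod_le_one (fun i _ => norm_nonneg _) ?_
  intro i hi
  rw [mem_range] at hi
  exact norm_eF_factor (by omega)

private lemma norm_eF_sub_one : ∀ k, k < p → ‖eF p k - 1‖ ≤ (p:ℝ)⁻¹ := by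
  intro k
  induction k with
  | zero => intro _; simp [eF]
  | succ k ih =>
    intro hk1
    have hk : k < p := by omega
    have hdecomp : eF p (k+1) - 1 =
        (eF p k - 1) * (1 - (p:ℚ_[p])/((k:ℚ_[p])+1)) + (-((p:ℚ_[p])/((k:ℚ_[p])+1))) := by
      rw [eF, Finset.prod_range_succ, ← eF]
      ring
    rw [hdecomp]
    refine le_trans (Padic.nonarchimedean _ _) (max_le ?_ ?_)
    · rw [norm_mul]
      calc ‖eF p k - 1‖ * ‖1 - (p:ℚ_[p])/((k:ℚ_[p])+1)‖ ≤ (p:ℝ)⁻¹ * 1 :=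
            mul_le_mul (ih hk) (norm_eF_factor hk1) (norm_nonneg _) (by positivity)
        _ = (p:ℝ)⁻¹ := mul_one _
    · rw [norm_neg, norm_v hk1]

private lemma norm_sum_cF (hp3 : 3 < p) (k : ℕ) (hk : k < p) :
    ‖∑ i ∈ range k, cF p i‖ ≤ 1 := by
  refine IsUltrametricDist.norm_sum_le_of_forall_le_of_nonneg zero_le_one ?_
  intro i hi
  rw [mem_range] at hi
  exact norm_cF hp3 (by omega)

private lemma prod_cong (hp3 : 3 < p) : ∀ k, k < p →
    ‖(∏ i ∈ range k, aF p i ^ (p+1)) -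
      (eF p k + (p:ℚ_[p])^3 * ∑ i ∈ range k, cF p i)‖ ≤ ((p:ℝ)⁻¹)^4 := by
  intro k
  induction k with
  | zero => intro _; simp [eF]
  | succ k ih =>
    intro hk1
    have hk : k < p := by omega
    have IH := ih hk
    rw [Finset.prod_range_succ]
    -- step 1 : multiply congruences
    have hA : ‖∏ i ∈ range k, aF p i ^ (p+1)‖ ≤ 1 := by
      rw [norm_prod]
      refine Finset.prod_le_one (fun i _ => norm_nonneg _) ?_
      intro i hi
      rw [mem_range] at hi
      rw [norm_pow]
      exact pow_le_one₀ (norm_nonneg _) (norm_aF hp3 (by omega))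
    have h1 : ‖(∏ i ∈ range k, aF p i ^ (p+1)) * aF p k ^ (p+1) -
        (eF p k + (p:ℚ_[p])^3 * ∑ i ∈ range k, cF p i) * bF p k‖ ≤ ((p:ℝ)⁻¹)^4 :=
      cong_mul hA (norm_bF hp3 hk1) IH (factor_cong hp3 hk1)
    refine cong_trans h1 ?_
    -- step 2 : algebraic expansion
    have hexp : (eF p k + (p:ℚ_[p])^3 * ∑ i ∈ range k, cF p i) * bF p k -
        (eF p (k+1) + (p:ℚ_[p])^3 * ∑ i ∈ range (k+1), cF p i) =
        -((p:ℚ_[p])^3 * (∑ i ∈ range k, cF p i) * ((p:ℚ_[p])/((k:ℚ_[p])+1)))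
        + (p:ℚ_[p])^3 * cF p k * (eF p k - 1)
        + (p:ℚ_[p])^6 * (∑ i ∈ range k, cF p i) * cF p k := by
      simp only [bF, eF]
      rw [Finset.prod_range_succ, Finset.sum_range_succ]
      ring
    rw [hexp]
    have hp4 : (0:ℝ) ≤ ((p:ℝ)⁻¹)^4 := by positivity
    refine le_trans (Padic.nonarchimedean _ _) (max_le
      (le_trans (Padic.nonarchimedean _ _) (max_le ?_ ?_)) ?_)
    · rw [norm_neg, norm_mul, norm_mul, norm_pow, Padic.norm_p, norm_v hk1]
      calc ((p:ℝ)⁻¹)^3 * ‖∑ i ∈ range k, cF p i‖ * (p:ℝ)⁻¹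
          ≤ ((p:ℝ)⁻¹)^3 * 1 * (p:ℝ)⁻¹ := by
            refine mul_le_mul_of_nonneg_right (mul_le_mul_of_nonneg_left
              (norm_sum_cF hp3 k hk) (by positivity)) (by positivity)
        _ = ((p:ℝ)⁻¹)^4 := by ring
    · rw [norm_mul, norm_mul, norm_pow, Padic.norm_p]
      calc ((p:ℝ)⁻¹)^3 * ‖cF p k‖ * ‖eF p k - 1‖
          ≤ ((p:ℝ)⁻¹)^3 * 1 * (p:ℝ)⁻¹ := by
            refine mul_le_mul (mul_le_mul_of_nonneg_left (norm_cF hp3 hk1) (by positivity))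
              (norm_eF_sub_one k hk) (norm_nonneg _) (by positivity)
        _ = ((p:ℝ)⁻¹)^4 := by ring
    · rw [norm_mul, norm_mul, norm_pow, Padic.norm_p]
      calc ((p:ℝ)⁻¹)^6 * ‖∑ i ∈ range k, cF p i‖ * ‖cF p k‖
          ≤ ((p:ℝ)⁻¹)^6 * 1 * 1 := by
            refine mul_le_mul (mul_le_mul_of_nonneg_left (norm_sum_cF hp3 k hk)
              (by positivity)) (norm_cF hp3 hk1) (norm_nonneg _) (by positivity)
        _ = ((p:ℝ)⁻¹)^6 := by ring
        _ ≤ ((p:ℝ)⁻¹)^4 := pow_le_pow_of_le_one (by positivity) pinv_le_one (by omega)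

end Prod

section Comb
variable {p : ℕ} [hp : Fact p.Prime]

private lemma eF_eq_choose : ∀ k, k ≤ p - 1 →
    eF p k = (-1:ℚ_[p])^k * ((p-1).choose k : ℚ_[p]) := by
  intro k
  induction k with
  | zero => intro _; simp [eF]
  | succ k ih =>
    intro hk1
    have hk : k ≤ p - 1 := by omega
    have hp1 : 1 ≤ p := hp.out.one_lt.le
    have hkp : k + 1 < p := by omega
    have hs : ((k:ℚ_[p])+1) ≠ 0 := nsucc_ne hkp
    have hcast : (((p-1).choose (k+1) : ℚ_[p])) * ((k:ℚ_[p])+1) =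
        ((p-1).choose k : ℚ_[p]) * ((p:ℚ_[p]) - 1 - k) := by
      have hnat := Nat.choose_succ_right_eq (p-1) k
      have hz : (((p-1).choose (k+1) : ℤ)) * ((k:ℤ)+1) =
          ((p-1).choose k : ℤ) * ((p:ℤ) - 1 - k) := by
        have h1 : ((p - 1 - k : ℕ) : ℤ) = (p:ℤ) - 1 - k := by omega
        have h2 := congrArg (fun n : ℕ => (n:ℤ)) hnat
        push_cast at h2
        rw [h1] at h2
        exact_mod_cast h2
      exact_mod_cast hz
    rw [eF, Finset.prod_range_succ, ← eF, ih hk]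
    apply mul_left_cancel₀ hs
    rw [show ((k:ℚ_[p])+1) * ((-1:ℚ_[p])^(k+1) * ((p-1).choose (k+1):ℚ_[p])) =
      (-1:ℚ_[p])^(k+1) * (((p-1).choose (k+1):ℚ_[p]) * ((k:ℚ_[p])+1)) from by ring, hcast]
    field_simp
    ring
  
private lemma int_sum (n : ℕ) (hn : 2 ≤ n) :
    ∑ k ∈ range (n+1), ((-1:ℤ)^k * k * n.choose k) = 0 := by
  rw [Finset.sum_range_succ']
  simp only [Nat.cast_zero, mul_zero, zero_mul, Nat.choose_zero_right, Nat.cast_one,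
    mul_one, add_zero, pow_zero, one_mul]
  obtain ⟨m, rfl⟩ : ∃ m, n = m + 1 := ⟨n-1, by omega⟩
  have key : ∀ i : ℕ, ((m+1).choose (i+1) : ℤ) * (i+1) = (m+1) * (m.choose i : ℤ) := by
    intro i
    exact_mod_cast congrArg (fun n : ℕ => (n:ℤ)) (Nat.add_one_mul_choose_eq m i).symm
  have step : ∀ i ∈ range (m+1), ((-1:ℤ)^(i+1) * (i+1) * (m+1).choose (i+1)) =
      (-(m+1)) * ((-1:ℤ)^i * m.choose i) := by
    intro i _
    have := key i
    calc ((-1:ℤ)^(i+1) * (i+1) * (m+1).choose (i+1))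
        = ((-1:ℤ)^(i+1)) * (((m+1).choose (i+1) : ℤ) * (i+1)) := by ring
      _ = ((-1:ℤ)^(i+1)) * ((m+1) * (m.choose i : ℤ)) := by rw [this]
      _ = (-(m+1)) * ((-1:ℤ)^i * m.choose i) := by rw [pow_succ]; ring
  push_cast
  rw [Finset.sum_congr rfl step, ← Finset.mul_sum]
  rw [Int.alternating_sum_range_choose_of_ne (by omega : m ≠ 0)]
  ring

private lemma sum_eF_zero (hp3 : 3 < p) :
    ∑ k ∈ range p, (k:ℚ_[p]) * eF p k = 0 := by
  have hstep : ∀ k ∈ range p, (k:ℚ_[p]) * eF p k =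
      (((-1:ℤ)^k * k * (p-1).choose k : ℤ) : ℚ_[p]) := by
    intro k hk
    rw [mem_range] at hk
    rw [eF_eq_choose k (by omega)]
    push_cast
    ring
  rw [Finset.sum_congr rfl hstep, ← Int.cast_sum]
  have hs := int_sum (p-1) (by omega)
  have hr : range p = range ((p-1)+1) := by
    congr 1
    omega
  rw [hr, hs]
  norm_num

end Comb

section Harmonic
variable {p : ℕ} [hp : Fact p.Prime]

private lemma harmonic_norm (hp3 : 3 < p) :
    ‖∑ i ∈ range (p-1), ((i:ℚ_[p])+1)⁻¹‖ ≤ (p:ℝ)⁻¹ := by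
  set W : ℚ_[p] := ∑ i ∈ range (p-1), ((i:ℚ_[p])+1)⁻¹ with hW
  have hrefl : ∑ i ∈ range (p-1), ((p:ℚ_[p])-1-i)⁻¹ = W := by
    rw [hW, ← Finset.sum_range_reflect (fun j => ((j:ℚ_[p])+1)⁻¹) (p-1)]
    refine Finset.sum_congr rfl ?_
    intro i hi
    rw [mem_range] at hi
    congr 1
    have h1 : ((p - 1 - 1 - i : ℕ) : ℚ_[p]) = (p:ℚ_[p]) - 2 - i := by
      have : ((p - 1 - 1 - i : ℕ) : ℤ) = (p:ℤ) - 2 - i := by omega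
      exact_mod_cast congrArg (fun z : ℤ => (z : ℚ_[p])) this
    rw [h1]
    ring
  have h2W : (2:ℚ_[p]) * W = ∑ i ∈ range (p-1),
      (((i:ℚ_[p])+1)⁻¹ + ((p:ℚ_[p])-1-i)⁻¹) := by
    rw [Finset.sum_add_distrib, hrefl, ← hW, two_mul]
  have hterm : ∀ i ∈ range (p-1), ((i:ℚ_[p])+1)⁻¹ + ((p:ℚ_[p])-1-i)⁻¹ =
      (p:ℚ_[p]) * (((i:ℚ_[p])+1) * ((p:ℚ_[p])-1-i))⁻¹ := by
    intro i hi
    rw [mem_range] at hi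
    have hs1 : ((i:ℚ_[p])+1) ≠ 0 := nsucc_ne (by omega)
    have hcast : ((p - 1 - i : ℕ) : ℚ_[p]) = (p:ℚ_[p]) - 1 - i := by
      have : ((p - 1 - i : ℕ) : ℤ) = (p:ℤ) - 1 - i := by omega
      exact_mod_cast congrArg (fun z : ℤ => (z : ℚ_[p])) this
    have hn2 : ‖(p:ℚ_[p]) - 1 - i‖ = 1 := by
      rw [← hcast]
      exact norm_nat_eq_one (by omega) (by omega)
    have hs2 : ((p:ℚ_[p])-1-i) ≠ 0 := by
      intro hc
      rw [hc, norm_zero] at hn2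
      norm_num at hn2
    field_simp
    ring
  have hnorm2 : ‖(2:ℚ_[p]) * W‖ ≤ (p:ℝ)⁻¹ := by
    rw [h2W]
    refine IsUltrametricDist.norm_sum_le_of_forall_le_of_nonneg (by positivity) ?_
    intro i hi
    rw [hterm i hi]
    rw [mem_range] at hi
    have hcast : ((p - 1 - i : ℕ) : ℚ_[p]) = (p:ℚ_[p]) - 1 - i := by
      have : ((p - 1 - i : ℕ) : ℤ) = (p:ℤ) - 1 - i := by omega
      exact_mod_cast congrArg (fun z : ℤ => (z : ℚ_[p])) this
    have hn2 : ‖(p:ℚ_[p]) - 1 - i‖ = 1 := by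
      rw [← hcast]
      exact norm_nat_eq_one (by omega) (by omega)
    rw [norm_mul, Padic.norm_p, norm_inv, norm_mul, hn2, nsucc (by omega : i + 1 < p)]
    norm_num
  rw [norm_mul, n2 hp3, one_mul] at hnorm2
  exact hnorm2

private lemma gauss_sum (n : ℕ) : (∑ k ∈ range n, (k:ℚ_[p])) * 2 = (n:ℚ_[p]) * ((n:ℚ_[p]) - 1) := by
  induction n with
  | zero => simp
  | succ m ih =>
    rw [Finset.sum_range_succ]
    push_cast
    linear_combination ih

end Harmonic

section Tsum
variable {p : ℕ} [hp : Fact p.Prime]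

private lemma T_cong (hp3 : 3 < p) :
    ‖(∑ k ∈ range p, (k:ℚ_[p]) * ∑ i ∈ range k, cF p i) - (4:ℚ_[p])⁻¹‖ ≤ (p:ℝ)⁻¹ := by
  have hq : ((p:ℚ_[p])+1) ≠ 0 := nq_ne hp3
  have h4 : ‖(4:ℚ_[p])‖ = 1 := by
    have h22 : (4:ℚ_[p]) = 2^2 := by norm_num
    rw [h22, norm_pow, n2 hp3]
    norm_num
  have h4ne : (4:ℚ_[p]) ≠ 0 := by
    intro hc; rw [hc, norm_zero] at h4; norm_num at h4
  have h2ne : (2:ℚ_[p]) ≠ 0 := two_ne_zero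
  -- swap sums
  have hswap : (∑ k ∈ range p, (k:ℚ_[p]) * ∑ i ∈ range k, cF p i) =
      ∑ i ∈ range p, ∑ k ∈ Ico (i+1) p, (k:ℚ_[p]) * cF p i := by
    calc ∑ k ∈ range p, (k:ℚ_[p]) * ∑ i ∈ range k, cF p i
        = ∑ k ∈ Ico 0 p, ∑ i ∈ Ico 0 k, (k:ℚ_[p]) * cF p i := by
          simp only [Nat.Ico_zero_eq_range, Finset.mul_sum]
      _ = ∑ i ∈ Ico 0 p, ∑ k ∈ Ico (i+1) p, (k:ℚ_[p]) * cF p i :=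
          (Finset.sum_Ico_Ico_comm' 0 p (fun i j => (j:ℚ_[p]) * cF p i)).symm
      _ = ∑ i ∈ range p, ∑ k ∈ Ico (i+1) p, (k:ℚ_[p]) * cF p i := by
          simp only [Nat.Ico_zero_eq_range]
  -- peel the last term
  have hpeel : (∑ i ∈ range p, ∑ k ∈ Ico (i+1) p, (k:ℚ_[p]) * cF p i) =
      ∑ i ∈ range (p-1), ∑ k ∈ Ico (i+1) p, (k:ℚ_[p]) * cF p i := by
    have hr : range p = range ((p-1)+1) := by congr 1; omega
    rw [hr, Finset.sum_range_succ]
    have : Ico ((p-1)+1) p = ∅ := by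
      rw [Finset.Ico_eq_empty_iff]
      omega
    rw [this, Finset.sum_empty, add_zero]
  rw [hswap, hpeel]
  -- Gauss sums
  have hgp : ∑ k ∈ range p, (k:ℚ_[p]) = (p:ℚ_[p])*((p:ℚ_[p])-1)/2 := by
    have := gauss_sum (p := p) p
    field_simp
    linear_combination this
  -- termwise congruence
  have hterm : ∀ i ∈ range (p-1),
      ‖(∑ k ∈ Ico (i+1) p, (k:ℚ_[p]) * cF p i) -
        (-((4*((p:ℚ_[p])+1))⁻¹ * (1 - ((i:ℚ_[p])+1)⁻¹)))‖ ≤ (p:ℝ)⁻¹ := by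
    intro i hi
    rw [mem_range] at hi
    have hs : ((i:ℚ_[p])+1) ≠ 0 := nsucc_ne (by omega)
    have hgi : ∑ k ∈ range (i+1), (k:ℚ_[p]) = ((i:ℚ_[p])+1)*(i:ℚ_[p])/2 := by
      have := gauss_sum (p := p) (i+1)
      push_cast at this ⊢
      field_simp
      linear_combination this
    have hIco : ∑ k ∈ Ico (i+1) p, (k:ℚ_[p]) =
        (p:ℚ_[p])*((p:ℚ_[p])-1)/2 - ((i:ℚ_[p])+1)*(i:ℚ_[p])/2 := by
      rw [Finset.sum_Ico_eq_sub _ (by omega : i+1 ≤ p), hgp, hgi]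
    have hfac : (∑ k ∈ Ico (i+1) p, (k:ℚ_[p]) * cF p i) =
        (∑ k ∈ Ico (i+1) p, (k:ℚ_[p])) * cF p i := by
      rw [Finset.sum_mul]
    have hexact : ((i:ℚ_[p])+1)*(i:ℚ_[p])/2 * cF p i =
        (4*((p:ℚ_[p])+1))⁻¹ * (1 - ((i:ℚ_[p])+1)⁻¹) := by
      rw [cF]
      field_simp
      ring
    have hdiff : (∑ k ∈ Ico (i+1) p, (k:ℚ_[p]) * cF p i) -
        (-((4*((p:ℚ_[p])+1))⁻¹ * (1 - ((i:ℚ_[p])+1)⁻¹))) =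
        ((p:ℚ_[p])*((p:ℚ_[p])-1)/2) * cF p i := by
      rw [hfac, hIco, ← hexact]
      ring
    rw [hdiff, norm_mul]
    have hnp1 : ‖(p:ℚ_[p])*((p:ℚ_[p])-1)/2‖ ≤ (p:ℝ)⁻¹ := by
      rw [norm_div, norm_mul, Padic.norm_p, n2 hp3, div_one]
      have hm1 : ‖(p:ℚ_[p])-1‖ ≤ 1 := by
        rw [sub_eq_add_neg]
        refine le_trans (Padic.nonarchimedean _ _) (max_le ?_ (by norm_num))
        rw [Padic.norm_p]
        exact pinv_le_one
      calc (p:ℝ)⁻¹ * ‖(p:ℚ_[p])-1‖ ≤ (p:ℝ)⁻¹ * 1 :=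
            mul_le_mul_of_nonneg_left hm1 (by positivity)
        _ = (p:ℝ)⁻¹ := mul_one _
    calc ‖(p:ℚ_[p])*((p:ℚ_[p])-1)/2‖ * ‖cF p i‖ ≤ (p:ℝ)⁻¹ * 1 :=
          mul_le_mul hnp1 (norm_cF hp3 (by omega)) (norm_nonneg _) (by positivity)
      _ = (p:ℝ)⁻¹ := mul_one _
  refine cong_trans (cong_sum (by positivity) hterm) ?_
  -- final evaluation
  have hsum : (∑ i ∈ range (p-1), -((4*((p:ℚ_[p])+1))⁻¹ * (1 - ((i:ℚ_[p])+1)⁻¹))) =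
      -((4*((p:ℚ_[p])+1))⁻¹ * (((p:ℚ_[p])-1) - ∑ i ∈ range (p-1), ((i:ℚ_[p])+1)⁻¹)) := by
    rw [Finset.sum_neg_distrib, ← Finset.mul_sum, Finset.sum_sub_distrib,
      Finset.sum_const, Finset.card_range, nsmul_eq_mul, mul_one]
    congr 3
    have : ((p - 1 : ℕ) : ℚ_[p]) = (p:ℚ_[p]) - 1 := by
      have h := (by omega : ((p - 1 : ℕ) : ℤ) = (p:ℤ) - 1)
      exact_mod_cast congrArg (fun z : ℤ => (z : ℚ_[p])) h
    rw [this]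
  rw [hsum]
  have hdec : -((4*((p:ℚ_[p])+1))⁻¹ * (((p:ℚ_[p])-1) - ∑ i ∈ range (p-1), ((i:ℚ_[p])+1)⁻¹))
      - (4:ℚ_[p])⁻¹ =
      (4*((p:ℚ_[p])+1))⁻¹ * (∑ i ∈ range (p-1), ((i:ℚ_[p])+1)⁻¹)
      + (-((p:ℚ_[p])/(2*((p:ℚ_[p])+1)))) := by
    field_simp
    ring
  rw [hdec]
  refine le_trans (Padic.nonarchimedean _ _) (max_le ?_ ?_)
  · rw [norm_mul, norm_inv, norm_mul, h4, nq hp3, one_mul, inv_one, one_mul]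
    exact harmonic_norm hp3
  · rw [norm_neg, norm_div, Padic.norm_p, norm_mul, n2 hp3, nq hp3]
    norm_num

end Tsum


theorem stmt_0 (p : ℕ) [hp : Fact p.Prime] (hp3 : 3 < p) :
    ‖((∑ k ∈ Finset.range p,
        (k : ℚ) * pochQ (1 / (p + 1)) k ^ (p + 1) / (k.factorial : ℚ) ^ (p + 1)
        - (p : ℚ) ^ 3 / 4 : ℚ) : ℚ_[p])‖ ≤ (p : ℝ) ^ (-4 : ℤ) := by
  have heps : ((p:ℝ))^(-4:ℤ) = ((p:ℝ)⁻¹)^4 := by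
    rw [show ((-4:ℤ)) = -((4:ℕ):ℤ) from by norm_num, zpow_neg, zpow_natCast, inv_pow]
  rw [heps]
  have hcast : ((((∑ k ∈ Finset.range p,
        (k : ℚ) * pochQ (1 / (p + 1)) k ^ (p + 1) / (k.factorial : ℚ) ^ (p + 1)
        - (p : ℚ) ^ 3 / 4 : ℚ)) : ℚ_[p])) =
      (∑ k ∈ Finset.range p, (k : ℚ_[p]) *
        (∏ j ∈ Finset.range k, (1 / ((p:ℚ_[p]) + 1) + j)) ^ (p + 1) /
        (k.factorial : ℚ_[p]) ^ (p + 1)) - (p : ℚ_[p]) ^ 3 / 4 := by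
    simp only [pochQ]
    push_cast
    ring
  rw [hcast]
  have hterm : ∀ k ∈ Finset.range p, (k : ℚ_[p]) *
      (∏ j ∈ Finset.range k, (1 / ((p:ℚ_[p]) + 1) + j)) ^ (p + 1) /
      (k.factorial : ℚ_[p]) ^ (p + 1) =
      (k : ℚ_[p]) * ∏ i ∈ Finset.range k, aF p i ^ (p + 1) := by
    intro k hk
    rw [Finset.mem_range] at hk
    have hfact : ((k.factorial : ℚ_[p])) = ∏ i ∈ Finset.range k, ((i:ℚ_[p])+1) := by
      rw [← Finset.prod_range_add_one_eq_factorial]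
      push_cast
      rfl
    have hP : (∏ j ∈ Finset.range k, (1 / ((p:ℚ_[p]) + 1) + j)) / (k.factorial : ℚ_[p]) =
        ∏ i ∈ Finset.range k, aF p i := by
      rw [hfact, ← Finset.prod_div_distrib]
      refine Finset.prod_congr rfl ?_
      intro i hi
      rw [Finset.mem_range] at hi
      have hs : ((i:ℚ_[p])+1) ≠ 0 := nsucc_ne (by omega)
      have hq : ((p:ℚ_[p])+1) ≠ 0 := nq_ne hp3
      rw [aF]
      field_simp
      ring
    rw [mul_div_assoc, ← div_pow, hP, ← Finset.prod_pow]
  rw [Finset.sum_congr rfl hterm]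
  have hknorm : ∀ k : ℕ, ‖(k : ℚ_[p])‖ ≤ 1 := by
    intro k
    have := Padic.norm_int_le_one (p := p) (k:ℤ)
    push_cast at this
    exact this
  have h1 : ‖(∑ k ∈ Finset.range p, (k : ℚ_[p]) * ∏ i ∈ Finset.range k, aF p i ^ (p + 1)) -
      (∑ k ∈ Finset.range p, (k : ℚ_[p]) *
        (eF p k + (p:ℚ_[p])^3 * ∑ i ∈ Finset.range k, cF p i))‖ ≤ ((p:ℝ)⁻¹)^4 := by
    refine cong_sum (by positivity) ?_
    intro k hk
    rw [Finset.mem_range] at hk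
    have hd : (k : ℚ_[p]) * ∏ i ∈ Finset.range k, aF p i ^ (p + 1) -
        (k : ℚ_[p]) * (eF p k + (p:ℚ_[p])^3 * ∑ i ∈ Finset.range k, cF p i) =
        (k : ℚ_[p]) * ((∏ i ∈ Finset.range k, aF p i ^ (p + 1)) -
          (eF p k + (p:ℚ_[p])^3 * ∑ i ∈ Finset.range k, cF p i)) := by ring
    rw [hd, norm_mul]
    calc ‖(k : ℚ_[p])‖ * ‖_‖ ≤ 1 * ((p:ℝ)⁻¹)^4 :=
          mul_le_mul (hknorm k) (prod_cong hp3 k hk) (norm_nonneg _) zero_le_one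
      _ = ((p:ℝ)⁻¹)^4 := one_mul _
  have hD : (∑ k ∈ Finset.range p, (k : ℚ_[p]) *
      (eF p k + (p:ℚ_[p])^3 * ∑ i ∈ Finset.range k, cF p i)) =
      (p:ℚ_[p])^3 * ∑ k ∈ Finset.range p, (k : ℚ_[p]) * ∑ i ∈ Finset.range k, cF p i := by
    simp only [mul_add]
    rw [Finset.sum_add_distrib, sum_eF_zero hp3, zero_add, Finset.mul_sum]
    refine Finset.sum_congr rfl ?_
    intro k _
    ring
  have h3 : ‖(p:ℚ_[p])^3 * (∑ k ∈ Finset.range p, (k : ℚ_[p]) *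
      ∑ i ∈ Finset.range k, cF p i) - (p : ℚ_[p]) ^ 3 / 4‖ ≤ ((p:ℝ)⁻¹)^4 := by
    have hd : (p:ℚ_[p])^3 * (∑ k ∈ Finset.range p, (k : ℚ_[p]) *
        ∑ i ∈ Finset.range k, cF p i) - (p : ℚ_[p]) ^ 3 / 4 =
        (p:ℚ_[p])^3 * ((∑ k ∈ Finset.range p, (k : ℚ_[p]) *
          ∑ i ∈ Finset.range k, cF p i) - (4:ℚ_[p])⁻¹) := by
      field_simp
    rw [hd, norm_mul, norm_pow, Padic.norm_p]
    calc ((p:ℝ)⁻¹)^3 * ‖_‖ ≤ ((p:ℝ)⁻¹)^3 * (p:ℝ)⁻¹ :=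
          mul_le_mul_of_nonneg_left (T_cong hp3) (by positivity)
      _ = ((p:ℝ)⁻¹)^4 := by ring
  exact cong_trans h1 (by rw [hD]; exact h3)
end

section
/- For any prime p > 3, the sum over k from 0 to p-1 of k·H_k^{(3)} is congruent to (1/3)·p·B_{p-3} modulo p^2. -/
set_option linter.unusedSectionVars false
open Finset
variable {p : ℕ} [hp : Fact p.Prime]

lemma norm_sum_le' {α : Type*} (s : Finset α) (f : α → ℚ_[p]) {C : ℝ} (hC : 0 ≤ C)
    (h : ∀ i ∈ s, ‖f i‖ ≤ C) : ‖∑ i ∈ s, f i‖ ≤ C := by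
  induction s using Finset.cons_induction with
  | empty => simpa
  | cons a s ha ih =>
    rw [Finset.sum_cons]
    exact le_trans (Padic.nonarchimedean _ _)
      (max_le (h a (mem_cons_self _ _)) (ih fun i hi => h i (mem_cons_of_mem hi)))

lemma tri3 {a b c : ℚ_[p]} {C : ℝ} (h1 : ‖a - b‖ ≤ C) (h2 : ‖b - c‖ ≤ C) : ‖a - c‖ ≤ C := by
  have : a - c = (a - b) + (b - c) := by ring
  rw [this]
  exact le_trans (Padic.nonarchimedean _ _) (max_le h1 h2)

lemma norm_nat_le_one (n : ℕ) : ‖(n : ℚ_[p])‖ ≤ 1 := by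
  have := Padic.norm_int_le_one (p := p) n
  simpa using this

lemma norm_unit {i : ℕ} (h : ¬ p ∣ i) : ‖(i : ℚ_[p])‖ = 1 := by
  refine le_antisymm (norm_nat_le_one i) ?_
  by_contra hlt
  push_neg at hlt
  have : ‖((i:ℤ) : ℚ_[p])‖ < 1 := by simpa using hlt
  rw [Padic.norm_intCast_lt_one_iff] at this
  exact h (by exact_mod_cast this)

lemma norm_val_nat {j : ℕ} (hj : j ≠ 0) : ‖(j : ℚ_[p])‖ = (p:ℝ) ^ (-(padicValNat p j : ℤ)) := by
  have h0 : (j : ℚ_[p]) ≠ 0 := Nat.cast_ne_zero.mpr hj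
  rw [Padic.norm_eq_zpow_neg_valuation h0, Padic.valuation_natCast]

lemma val_le {j v : ℕ} (hj : j ≠ 0) (h : j < p ^ (v+1)) : padicValNat p j ≤ v := by
  by_contra hc
  push_neg at hc
  have hd : p ^ (v+1) ∣ j := dvd_trans (pow_dvd_pow p hc) (pow_padicValNat_dvd)
  exact absurd (Nat.le_of_dvd (Nat.pos_of_ne_zero hj) hd) (by omega)

lemma norm_inv_nat_le {j v : ℕ} (hj : j ≠ 0) (h : j < p ^ (v+1)) :
    ‖((j : ℚ_[p]))⁻¹‖ ≤ (p:ℝ) ^ (v : ℤ) := by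
  rw [norm_inv, norm_val_nat hj, ← zpow_neg, neg_neg]
  have hp1 : (1:ℝ) < p := by exact_mod_cast hp.out.one_lt
  exact zpow_le_zpow_right₀ (le_of_lt hp1) (by exact_mod_cast val_le hj h)

lemma fermat {i : ℕ} (h : ¬ p ∣ i) : ‖(i : ℚ_[p]) ^ (p-1) - 1‖ ≤ (p:ℝ) ^ (-1 : ℤ) := by
  have hdvd : ((p : ℤ)) ∣ ((i:ℤ) ^ (p-1) - 1) := by
    have hi : (i : ZMod p) ≠ 0 := by
      rwa [Ne, ZMod.natCast_eq_zero_iff]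
    have := ZMod.pow_card_sub_one_eq_one hi
    have h2 : (((i:ℤ) ^ (p-1) - 1 : ℤ) : ZMod p) = 0 := by push_cast [this]; ring
    exact_mod_cast (ZMod.intCast_zmod_eq_zero_iff_dvd _ _).mp h2
  have := (Padic.norm_int_le_pow_iff_dvd (p := p) ((i:ℤ)^(p-1) - 1) 1).mpr (by simpa using hdvd)
  calc ‖(i : ℚ_[p]) ^ (p-1) - 1‖ = ‖(((i:ℤ)^(p-1) - 1 : ℤ) : ℚ_[p])‖ := by push_cast; ring_nf
    _ ≤ (p:ℝ) ^ (-1 : ℤ) := by simpa using this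

noncomputable def Bp (p : ℕ) [Fact p.Prime] (i : ℕ) : ℚ_[p] := ((bernoulli i : ℚ) : ℚ_[p])

lemma faulhaber' (n : ℕ) :
    (∑ k ∈ range p, (k:ℚ_[p])^n)
      = ∑ i ∈ range (n+1), Bp p i * (n.choose i) * (p:ℚ_[p])^(n+1-i) / ((n+1-i : ℕ) : ℚ_[p]) := by
  have h := sum_range_pow p n
  have h2 : ((∑ k ∈ range p, (k:ℚ)^n : ℚ) : ℚ_[p])
      = ((∑ i ∈ range (n+1), bernoulli i * ((n+1).choose i) * (p:ℚ)^(n+1-i) / (n+1) : ℚ) : ℚ_[p]) := by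
    exact_mod_cast congrArg (fun q : ℚ => (q : ℚ_[p])) h
  push_cast at h2
  rw [h2]
  apply Finset.sum_congr rfl
  intro i hi
  simp only [Finset.mem_range] at hi
  have hi' : i ≤ n := by omega
  have hkey : ((n.choose i : ℕ) : ℚ_[p]) * ((n+1 : ℕ) : ℚ_[p])
      = (((n+1).choose i : ℕ) : ℚ_[p]) * ((n+1-i : ℕ) : ℚ_[p]) := by
    exact_mod_cast congrArg (fun m : ℕ => (m : ℚ_[p])) (Nat.choose_mul_succ_eq n i)
  have h1 : ((n+1-i : ℕ) : ℚ_[p]) ≠ 0 := Nat.cast_ne_zero.mpr (by omega)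
  have h2 : ((n:ℚ_[p]) + 1) ≠ 0 := by
    have : ((n+1 : ℕ) : ℚ_[p]) ≠ 0 := Nat.cast_ne_zero.mpr (by omega)
    push_cast at this; exact this
  simp only [Bp]
  rw [div_eq_div_iff h2 h1]
  push_cast at hkey
  linear_combination (-((bernoulli i : ℚ) : ℚ_[p]) * (p:ℚ_[p])^(n+1-i)) * hkey

lemma pBn_eq (n : ℕ) :
    (p:ℚ_[p]) * Bp p n = (∑ k ∈ range p, (k:ℚ_[p])^n)
      - ∑ i ∈ range n, Bp p i * (n.choose i) * (p:ℚ_[p])^(n+1-i) / ((n+1-i : ℕ) : ℚ_[p]) := by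
  have h1 : n + 1 - n = 1 := by omega
  rw [faulhaber', Finset.sum_range_succ, h1]
  simp [Nat.choose_self]
  ring

lemma nmul {x y : ℚ_[p]} {a b : ℤ} (hx : ‖x‖ ≤ (p:ℝ)^a) (hy : ‖y‖ ≤ (p:ℝ)^b) :
    ‖x*y‖ ≤ (p:ℝ)^(a+b) := by
  have hp0 : (0:ℝ) < p := by exact_mod_cast hp.out.pos
  rw [norm_mul, zpow_add₀ (ne_of_gt hp0)]
  exact mul_le_mul hx hy (norm_nonneg y) (zpow_nonneg (le_of_lt hp0) a)

lemma npp (j : ℕ) : ‖(p:ℚ_[p])^j‖ = (p:ℝ)^(-(j:ℤ)) := by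
  rw [norm_pow, Padic.norm_p, inv_pow, ← zpow_natCast, ← zpow_neg]

lemma n_one {x : ℚ_[p]} (h : ‖x‖ ≤ 1) : ‖x‖ ≤ (p:ℝ)^(0:ℤ) := by simpa using h

lemma vonStaudt (n : ℕ) : ‖Bp p n‖ ≤ (p:ℝ)^(1:ℤ) := by
  induction n using Nat.strong_induction_on with
  | _ n ih =>
  have hp0 : (0:ℝ) < p := by exact_mod_cast hp.out.pos
  have key : ‖(p:ℚ_[p]) * Bp p n‖ ≤ 1 := by
    rw [pBn_eq, sub_eq_add_neg]
    refine le_trans (Padic.nonarchimedean _ _) (max_le ?_ ?_)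
    · exact norm_sum_le' _ _ zero_le_one fun k _ => by
        rw [norm_pow]; exact pow_le_one₀ (norm_nonneg _) (norm_nat_le_one k)
    · rw [norm_neg]
      refine norm_sum_le' _ _ zero_le_one fun i hi => ?_
      simp only [Finset.mem_range] at hi
      have hj2 : 2 ≤ n + 1 - i := by omega
      have hjlt : n + 1 - i < p ^ ((n+1-i-1) + 1) := by
        calc n + 1 - i < 2 ^ (n+1-i) := Nat.lt_two_pow_self
        _ ≤ p ^ (n+1-i) := Nat.pow_le_pow_left hp.out.two_le _
        _ = p ^ ((n+1-i-1)+1) := by congr 1; omega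
      have hinv : ‖(((n+1-i:ℕ)) : ℚ_[p])⁻¹‖ ≤ (p:ℝ)^(((n+1-i:ℕ):ℤ) - 1) := by
        have := norm_inv_nat_le (p := p) (j := n+1-i) (v := n+1-i-1) (by omega) hjlt
        convert this using 2
        omega
      have hterm : ‖Bp p i * (n.choose i) * (p:ℚ_[p])^(n+1-i) / ((n+1-i : ℕ) : ℚ_[p])‖
          ≤ (p:ℝ)^((1:ℤ) + 0 + (-((n+1-i:ℕ):ℤ)) + (((n+1-i:ℕ):ℤ) - 1)) := by
        rw [div_eq_mul_inv]
        exact nmul (nmul (nmul (ih i hi) (n_one (norm_nat_le_one _))) (le_of_eq (npp _))) hinv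
      calc ‖_‖ ≤ _ := hterm
        _ = 1 := by rw [show (1:ℤ) + 0 + (-((n+1-i:ℕ):ℤ)) + (((n+1-i:ℕ):ℤ) - 1) = 0 by ring, zpow_zero]
  calc ‖Bp p n‖ = ((p:ℝ))⁻¹⁻¹ * ‖(p:ℚ_[p]) * Bp p n‖ := by
        rw [norm_mul, Padic.norm_p, ← mul_assoc, inv_inv,
          mul_inv_cancel₀ (ne_of_gt hp0), one_mul]
    _ ≤ (p:ℝ) * 1 := by
        rw [inv_inv]
        exact mul_le_mul_of_nonneg_left key (le_of_lt hp0)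
    _ = (p:ℝ)^(1:ℤ) := by simp

lemma not_dvd_small {i : ℕ} (h1 : 0 < i) (h2 : i < p) : ¬ p ∣ i :=
  fun hd => absurd (Nat.le_of_dvd h1 hd) (by omega)

lemma bodd (hp5 : 5 ≤ p) {m : ℕ} (hm : Odd m) : ‖Bp p m‖ ≤ 1 := by
  rcases eq_or_ne m 1 with rfl | hm1
  · have : bernoulli 1 = -1/2 := by exact bernoulli_one
    simp only [Bp, this]
    push_cast
    rw [neg_div, norm_neg, one_div, norm_inv]
    rw [show ((2:ℚ_[p])) = ((2:ℕ):ℚ_[p]) by norm_num, norm_unit (not_dvd_small (by norm_num) (by omega))]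
    norm_num
  · have hz : bernoulli m = 0 := by
      rw [bernoulli_eq_bernoulli'_of_ne_one hm1]
      exact bernoulli'_eq_zero_of_odd hm (by rcases hm with ⟨k, rfl⟩; omega)
    simp [Bp, hz]

lemma five_pow : ∀ k : ℕ, 1 ≤ k → k + 2 < 5 ^ k := by
  intro k hk
  induction k with
  | zero => omega
  | succ k ih =>
    rcases Nat.eq_zero_or_pos k with rfl | hk0
    · norm_num
    · have h5 : 5^(k+1) = 5 * 5^k := by ring
      have h1 : 1 ≤ 5^k := Nat.one_le_pow _ _ (by norm_num)
      have := ih hk0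
      omega

lemma master (hp5 : 5 ≤ p) {n : ℕ} (hn : Even n) (hn0 : n ≠ 0) :
    ‖(∑ k ∈ range p, (k:ℚ_[p])^n) - (p:ℚ_[p]) * Bp p n‖ ≤ (p:ℝ)^(-2:ℤ) := by
  have hp0 : (0:ℝ) < p := by exact_mod_cast hp.out.pos
  have heq : (∑ k ∈ range p, (k:ℚ_[p])^n) - (p:ℚ_[p]) * Bp p n
      = ∑ i ∈ range n, Bp p i * (n.choose i) * (p:ℚ_[p])^(n+1-i) / ((n+1-i : ℕ) : ℚ_[p]) := by
    rw [pBn_eq]; ring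
  rw [heq]
  refine norm_sum_le' _ _ (zpow_nonneg (le_of_lt hp0) _) fun i hi => ?_
  simp only [Finset.mem_range] at hi
  rw [div_eq_mul_inv]
  by_cases hi2 : i = n - 1
  · subst hi2
    have h2 : n + 1 - (n-1) = 2 := by omega
    rw [h2]
    have hodd : Odd (n-1) := by
      rcases hn with ⟨k, hk⟩; exact ⟨k-1, by omega⟩
    have hb : ‖Bp p (n-1)‖ ≤ (p:ℝ)^(0:ℤ) := n_one (bodd hp5 hodd)
    have hinv : ‖(((2:ℕ)) : ℚ_[p])⁻¹‖ ≤ (p:ℝ)^(0:ℤ) := by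
      rw [norm_inv, norm_unit (not_dvd_small (by norm_num) (by omega))]
      norm_num
    calc ‖_‖ ≤ (p:ℝ)^((0:ℤ) + 0 + (-((2:ℕ):ℤ)) + 0) :=
          nmul (nmul (nmul hb (n_one (norm_nat_le_one _))) (le_of_eq (npp _))) hinv
      _ = (p:ℝ)^(-2:ℤ) := by norm_num
  · have hj3 : 3 ≤ n + 1 - i := by omega
    have hjlt : n + 1 - i < p ^ ((n+1-i-3) + 1) := by
      calc n + 1 - i < 5 ^ (n+1-i-2) := by
            have := five_pow (n+1-i-2) (by omega)
            omega
        _ ≤ p ^ (n+1-i-2) := Nat.pow_le_pow_left (by omega) _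
        _ = p ^ ((n+1-i-3)+1) := by congr 1; omega
    have hinv : ‖(((n+1-i:ℕ)) : ℚ_[p])⁻¹‖ ≤ (p:ℝ)^(((n+1-i:ℕ):ℤ) - 3) := by
      have := norm_inv_nat_le (p := p) (j := n+1-i) (v := n+1-i-3) (by omega) hjlt
      convert this using 2
      omega
    calc ‖_‖ ≤ (p:ℝ)^((1:ℤ) + 0 + (-((n+1-i:ℕ):ℤ)) + (((n+1-i:ℕ):ℤ) - 3)) :=
          nmul (nmul (nmul (vonStaudt i) (n_one (norm_nat_le_one _))) (le_of_eq (npp _))) hinv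
      _ = (p:ℝ)^(-2:ℤ) := by
          congr 1
          ring

lemma range_to_Icc (g : ℕ → ℚ_[p]) (hg : g 0 = 0) :
    ∑ k ∈ range p, g k = ∑ k ∈ Icc 1 (p-1), g k := by
  have hp1 : 1 ≤ p := hp.out.pos
  have h : range p = insert 0 (Icc 1 (p-1)) := by
    ext j
    simp only [Finset.mem_range, Finset.mem_insert, Finset.mem_Icc]
    omega
  rw [h, Finset.sum_insert (by simp), hg, zero_add]

lemma reindex (hodd : p % 2 = 1) (f : ℕ → ℚ_[p]) :
    ∑ j ∈ Icc 1 (p-1), f j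
      = ∑ i ∈ Icc 1 ((p-1)/2), f (2*i) + ∑ i ∈ Icc ((p-1)/2+1) (p-1), f (2*i - p) := by
  set M := (p-1)/2 with hMdef
  have hp1 : 1 ≤ p := hp.out.pos
  have hM : p = 2*M+1 := by omega
  have hinj1 : ∀ x ∈ Icc 1 M, ∀ y ∈ Icc 1 M, 2*x = 2*y → x = y := fun x _ y _ h => by omega
  have hinj2 : ∀ x ∈ Icc (M+1) (p-1), ∀ y ∈ Icc (M+1) (p-1), 2*x - p = 2*y - p → x = y := by
    intro x hx y hy h
    simp only [Finset.mem_Icc] at hx hy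
    omega
  have hdisj : Disjoint ((Icc 1 M).image (fun i => 2*i))
      ((Icc (M+1) (p-1)).image (fun i => 2*i - p)) := by
    rw [Finset.disjoint_left]
    rintro j hj1 hj2
    simp only [Finset.mem_image, Finset.mem_Icc] at hj1 hj2
    obtain ⟨a, ha, rfl⟩ := hj1
    obtain ⟨b, hb, hba⟩ := hj2
    omega
  have hunion : (Icc 1 M).image (fun i => 2*i) ∪ (Icc (M+1) (p-1)).image (fun i => 2*i - p)
      = Icc 1 (p-1) := by
    ext j
    simp only [Finset.mem_union, Finset.mem_image, Finset.mem_Icc]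
    constructor
    · rintro (⟨i, hi, rfl⟩ | ⟨i, hi, rfl⟩) <;> omega
    · intro hj
      rcases Nat.even_or_odd j with ⟨k, hk⟩ | ⟨k, hk⟩
      · exact Or.inl ⟨k, by omega, by omega⟩
      · exact Or.inr ⟨M+1+k, by omega, by omega⟩
  rw [← hunion, Finset.sum_union hdisj, Finset.sum_image hinj1, Finset.sum_image hinj2]

lemma binom_est (x : ℚ_[p]) (hx : ‖x‖ ≤ 1) {n : ℕ} (hn : 1 ≤ n) :
    ‖x^n - (x - p)^n - (n:ℚ_[p]) * p * x^(n-1)‖ ≤ (p:ℝ)^(-2:ℤ) := by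
  have hp0 : (0:ℝ) < p := by exact_mod_cast hp.out.pos
  have hp1 : (1:ℝ) ≤ p := by exact_mod_cast hp.out.one_le
  obtain ⟨m, rfl⟩ : ∃ m, n = m + 1 := ⟨n-1, by omega⟩
  have hsub := sub_pow x ((p:ℕ):ℚ_[p]) (m+1)
  rw [Finset.sum_range_succ, Finset.sum_range_succ] at hsub
  have hA : ((-1:ℚ_[p]))^((m+1)+(m+1)) = 1 := Even.neg_one_pow ⟨m+1, rfl⟩
  have hB : ((-1:ℚ_[p]))^(m+(m+1)) = -1 := Odd.neg_one_pow ⟨m, by ring⟩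
  rw [hA, hB, Nat.sub_self, Nat.choose_self, Nat.choose_succ_self_right,
    show m+1-m = 1 by omega, pow_zero, pow_one] at hsub
  have key : x^(m+1) - (x - p)^(m+1) - ((m+1:ℕ):ℚ_[p]) * p * x^(m+1-1)
      = -∑ k ∈ range m, ((-1:ℚ_[p]))^(k+(m+1)) * x^k * ((p:ℕ):ℚ_[p])^(m+1-k) * ((m+1).choose k) := by
    rw [show m+1-1 = m from rfl, hsub]
    push_cast
    ring
  rw [key, norm_neg]
  refine norm_sum_le' _ _ (zpow_nonneg (le_of_lt hp0) _) fun k hk => ?_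
  simp only [Finset.mem_range] at hk
  have h1 : ‖((-1:ℚ_[p]))^(k+(m+1)) * x^k‖ ≤ (p:ℝ)^(0:ℤ) := by
    rw [norm_mul, norm_pow, norm_pow, norm_neg, norm_one, one_pow, one_mul]
    simpa using pow_le_one₀ (norm_nonneg _) hx
  have h2 : ‖((p:ℕ):ℚ_[p])^(m+1-k)‖ ≤ (p:ℝ)^(-((m+1-k:ℕ):ℤ)) := le_of_eq (npp _)
  calc ‖_‖ ≤ (p:ℝ)^((0:ℤ) + (-((m+1-k:ℕ):ℤ)) + 0) :=
        nmul (nmul h1 h2) (n_one (norm_nat_le_one _))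
    _ ≤ (p:ℝ)^(-2:ℤ) := by
        apply zpow_le_zpow_right₀ hp1
        have : (2:ℤ) ≤ ((m+1-k:ℕ):ℤ) := by omega
        omega

lemma voronoi (hp5 : 5 ≤ p) {n : ℕ} (hn : 1 ≤ n) :
    ‖((2:ℚ_[p])^n - 1) * (∑ k ∈ range p, (k:ℚ_[p])^n)
      - (n:ℚ_[p]) * p * 2^(n-1) * (∑ i ∈ Icc ((p-1)/2+1) (p-1), (i:ℚ_[p])^(n-1))‖
      ≤ (p:ℝ)^(-2:ℤ) := by
  have hp0 : (0:ℝ) < p := by exact_mod_cast hp.out.pos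
  have hodd : p % 2 = 1 := Nat.odd_iff.mp (hp.out.odd_of_ne_two (by omega))
  set M := (p-1)/2 with hMdef
  have hpart : ∀ g : ℕ → ℚ_[p], ∑ i ∈ Icc 1 (p-1), g i
      = ∑ i ∈ Icc 1 M, g i + ∑ i ∈ Icc (M+1) (p-1), g i := by
    intro g
    have hu : Icc 1 M ∪ Icc (M+1) (p-1) = Icc 1 (p-1) := by
      ext j; simp only [Finset.mem_union, Finset.mem_Icc]; omega
    rw [← hu, Finset.sum_union]
    rw [Finset.disjoint_left]
    intro a h1 h2
    simp only [Finset.mem_Icc] at h1 h2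
    omega
  have hS : (∑ k ∈ range p, (k:ℚ_[p])^n) = ∑ i ∈ Icc 1 (p-1), (i:ℚ_[p])^n :=
    range_to_Icc _ (by simp [zero_pow (show n ≠ 0 by omega)])
  have h1 : (∑ i ∈ Icc 1 (p-1), (i:ℚ_[p])^n)
      = ∑ i ∈ Icc 1 M, (2*(i:ℚ_[p]))^n + ∑ i ∈ Icc (M+1) (p-1), (2*(i:ℚ_[p]) - p)^n := by
    rw [reindex hodd (fun j => (j:ℚ_[p])^n)]
    congr 1
    · exact Finset.sum_congr rfl fun i _ => by push_cast; ring
    · refine Finset.sum_congr rfl fun i hi => ?_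
      simp only [Finset.mem_Icc] at hi
      rw [Nat.cast_sub (by omega)]
      push_cast
      ring
  have h2 : (2:ℚ_[p])^n * (∑ i ∈ Icc 1 (p-1), (i:ℚ_[p])^n)
      = ∑ i ∈ Icc 1 M, (2*(i:ℚ_[p]))^n + ∑ i ∈ Icc (M+1) (p-1), (2*(i:ℚ_[p]))^n := by
    rw [Finset.mul_sum, ← hpart]
    exact Finset.sum_congr rfl fun i _ => by rw [mul_pow]
  have h3 : (n:ℚ_[p]) * p * 2^(n-1) * (∑ i ∈ Icc (M+1) (p-1), (i:ℚ_[p])^(n-1))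
      = ∑ i ∈ Icc (M+1) (p-1), (n:ℚ_[p]) * p * (2*(i:ℚ_[p]))^(n-1) := by
    rw [Finset.mul_sum]
    exact Finset.sum_congr rfl fun i _ => by rw [mul_pow]; ring
  have hmain : ((2:ℚ_[p])^n - 1) * (∑ k ∈ range p, (k:ℚ_[p])^n)
      - (n:ℚ_[p]) * p * 2^(n-1) * (∑ i ∈ Icc (M+1) (p-1), (i:ℚ_[p])^(n-1))
      = ∑ i ∈ Icc (M+1) (p-1),
          ((2*(i:ℚ_[p]))^n - (2*(i:ℚ_[p]) - p)^n - (n:ℚ_[p]) * p * (2*(i:ℚ_[p]))^(n-1)) := by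
    rw [hS, h3]
    have : ((2:ℚ_[p])^n - 1) * (∑ i ∈ Icc 1 (p-1), (i:ℚ_[p])^n)
        = (2:ℚ_[p])^n * (∑ i ∈ Icc 1 (p-1), (i:ℚ_[p])^n)
          - (∑ i ∈ Icc 1 (p-1), (i:ℚ_[p])^n) := by ring
    rw [this, h2, h1, Finset.sum_sub_distrib, Finset.sum_sub_distrib]
    ring
  rw [hmain]
  refine norm_sum_le' _ _ (zpow_nonneg (le_of_lt hp0) _) fun i hi => ?_
  have hxi : ‖2*(i:ℚ_[p])‖ ≤ 1 := by
    have := norm_nat_le_one (p := p) (2*i)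
    push_cast at this
    exact this
  exact binom_est _ hxi hn

lemma nadd {x y : ℚ_[p]} {C : ℝ} (hx : ‖x‖ ≤ C) (hy : ‖y‖ ≤ C) : ‖x + y‖ ≤ C :=
  le_trans (Padic.nonarchimedean _ _) (max_le hx hy)

lemma nsub {x y : ℚ_[p]} {C : ℝ} (hx : ‖x‖ ≤ C) (hy : ‖y‖ ≤ C) : ‖x - y‖ ≤ C := by
  rw [sub_eq_add_neg]; exact nadd hx (by rwa [norm_neg])

lemma tri0 {a b : ℚ_[p]} {C : ℝ} (h1 : ‖a - b‖ ≤ C) (h2 : ‖b‖ ≤ C) : ‖a‖ ≤ C := by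
  have : a = (a - b) + b := by ring
  rw [this]; exact nadd h1 h2

lemma norm_add_eq_left {a b : ℚ_[p]} (h : ‖b‖ < ‖a‖) : ‖a + b‖ = ‖a‖ := by
  rcases eq_or_ne b 0 with rfl | hb
  · simp
  rw [Padic.add_eq_max_of_ne (ne_of_gt h)]
  exact max_eq_left (le_of_lt h)

lemma div_p {y : ℚ_[p]} {a : ℤ} (h : ‖(p:ℚ_[p]) * y‖ ≤ (p:ℝ)^(a-1)) : ‖y‖ ≤ (p:ℝ)^a := by
  have hp0 : (0:ℝ) < p := by exact_mod_cast hp.out.pos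
  rw [norm_mul, Padic.norm_p] at h
  calc ‖y‖ = (p:ℝ) * ((p:ℝ)⁻¹ * ‖y‖) := by
        rw [← mul_assoc, mul_inv_cancel₀ (ne_of_gt hp0), one_mul]
    _ ≤ (p:ℝ) * (p:ℝ)^(a-1) := mul_le_mul_of_nonneg_left h (le_of_lt hp0)
    _ = (p:ℝ)^a := by
        rw [show (p:ℝ) * (p:ℝ)^(a-1) = (p:ℝ)^(1:ℤ) * (p:ℝ)^(a-1) by norm_num,
          ← zpow_add₀ (ne_of_gt hp0)]
        congr 1; ring

lemma norm_mul_unit {x y : ℚ_[p]} {C : ℝ} (hx : ‖x‖ = 1) (h : ‖x * y‖ ≤ C) : ‖y‖ ≤ C := by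
  rwa [norm_mul, hx, one_mul] at h

lemma cmul2 {x y E : ℚ_[p]} {C : ℝ} (hx : ‖x‖ ≤ 1) (hy : ‖y‖ ≤ 1) (hE : ‖E‖ ≤ C) :
    ‖x*y*E‖ ≤ C := by
  rw [norm_mul, norm_mul]
  calc ‖x‖*‖y‖*‖E‖ ≤ 1*1*‖E‖ := by
        apply mul_le_mul (mul_le_mul hx hy (norm_nonneg _) zero_le_one) le_rfl (norm_nonneg _)
        norm_num
    _ = ‖E‖ := by ring
    _ ≤ C := hE

lemma kummer_all (hp5 : 5 ≤ p) :
    ‖Bp p (p-3)‖ ≤ 1 ∧ ‖Bp p (2*p-4)‖ ≤ 1 ∧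
    ‖4*Bp p (p-3) - 3*Bp p (2*p-4)‖ ≤ (p:ℝ)^(-1:ℤ) := by
  have hp0 : (0:ℝ) < p := by exact_mod_cast hp.out.pos
  have hp1 : (1:ℝ) < p := by exact_mod_cast hp.out.one_lt
  have hpinv1 : (p:ℝ)^(-1:ℤ) < 1 := by
    rw [zpow_neg, zpow_one]
    exact inv_lt_one_of_one_lt₀ hp1
  have hpinv_le1 : (p:ℝ)^(-1:ℤ) ≤ 1 := le_of_lt hpinv1
  have hodd : p % 2 = 1 := Nat.odd_iff.mp (hp.out.odd_of_ne_two (by omega))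
  set M := (p-1)/2 with hMdef
  set b3 := Bp p (p-3) with hb3def
  set b4 := Bp p (2*p-4) with hb4def
  set S3 := ∑ k ∈ range p, (k:ℚ_[p])^(p-3) with hS3def
  set S4 := ∑ k ∈ range p, (k:ℚ_[p])^(2*p-4) with hS4def
  set U3 := ∑ i ∈ Icc (M+1) (p-1), (i:ℚ_[p])^(p-4) with hU3def
  set U4 := ∑ i ∈ Icc (M+1) (p-1), (i:ℚ_[p])^(2*p-5) with hU4def
  set δ := (2:ℚ_[p])^(p-1) - 1 with hδdef
  set c := (2:ℚ_[p])^(p-3) with hcdef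
  set c4 := (2:ℚ_[p])^(2*p-4) with hc4def
  set d := (2:ℚ_[p])^(p-4) with hddef
  set d4 := (2:ℚ_[p])^(2*p-5) with hd4def
  set m3 := ((p-3:ℕ):ℚ_[p]) with hm3def
  set m4 := ((2*p-4:ℕ):ℚ_[p]) with hm4def
  have h1δ : 1 + δ = (2:ℚ_[p])^(p-1) := by rw [hδdef]; ring
  have hd' : d = (1+δ)/8 := by
    rw [h1δ, hddef, show p-1 = (p-4)+3 by omega, pow_add]
    field_simp
    ring
  have hc' : c = (1+δ)/4 := by
    rw [h1δ, hcdef, show p-1 = (p-3)+2 by omega, pow_add]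
    field_simp
    ring
  have hsq : ((2:ℚ_[p])^(p-1))^2 = (2:ℚ_[p])^(2*p-2) := by
    rw [← pow_mul]; congr 1; omega
  have hc4' : c4 = (1+δ)^2/4 := by
    rw [h1δ, hsq, hc4def, show 2*p-2 = (2*p-4)+2 by omega, pow_add]
    field_simp
    ring
  have hd4' : d4 = (1+δ)^2/8 := by
    rw [h1δ, hsq, hd4def, show 2*p-2 = (2*p-5)+3 by omega, pow_add]
    field_simp
    ring
  -- norm facts
  have h2n : ‖(2:ℚ_[p])‖ = 1 := by
    have := norm_unit (p := p) (i := 2) (not_dvd_small (by norm_num) (by omega))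
    push_cast at this
    exact this
  have h3n : ‖(3:ℚ_[p])‖ = 1 := by
    have := norm_unit (p := p) (i := 3) (not_dvd_small (by norm_num) (by omega))
    push_cast at this
    exact this
  have hδn : ‖δ‖ ≤ (p:ℝ)^(-1:ℤ) := by
    have := fermat (p := p) (i := 2) (not_dvd_small (by norm_num) (by omega))
    push_cast at this
    rw [hδdef]
    exact this
  have hδ1 : ‖δ‖ < 1 := lt_of_le_of_lt hδn hpinv1
  have h1δn : ‖1 + δ‖ = 1 := by
    rw [norm_add_eq_left (by rw [norm_one]; exact hδ1), norm_one]
  have hδ2n : ‖δ + 2‖ ≤ 1 := nadd (le_trans (le_of_lt hδ1) le_rfl) (le_of_eq h2n)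
  have hδm2n : ‖δ - 2‖ ≤ 1 := nsub (le_of_lt hδ1) (le_of_eq h2n)
  have hcn : ‖c‖ ≤ 1 := by rw [hcdef, norm_pow, h2n, one_pow]
  have hc4n : ‖c4‖ ≤ 1 := by rw [hc4def, norm_pow, h2n, one_pow]
  have hdn : ‖d‖ ≤ 1 := by rw [hddef, norm_pow, h2n, one_pow]
  have hd4n : ‖d4‖ ≤ 1 := by rw [hd4def, norm_pow, h2n, one_pow]
  have hm3n : ‖m3‖ ≤ 1 := norm_nat_le_one _
  have hm4n : ‖m4‖ ≤ 1 := norm_nat_le_one _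
  have hU3n : ‖U3‖ ≤ 1 := by
    rw [hU3def]
    exact norm_sum_le' _ _ zero_le_one fun i _ => by
      rw [norm_pow]; exact pow_le_one₀ (norm_nonneg _) (norm_nat_le_one i)
  have hU4n : ‖U4‖ ≤ 1 := by
    rw [hU4def]
    exact norm_sum_le' _ _ zero_le_one fun i _ => by
      rw [norm_pow]; exact pow_le_one₀ (norm_nonneg _) (norm_nat_le_one i)
  have hc1 : ‖c - 1‖ = 1 := by
    have he : c - 1 = ((-3) + δ)/4 := by rw [hc']; ring
    rw [he, norm_div, norm_add_eq_left (by rw [norm_neg, h3n]; exact hδ1), norm_neg, h3n,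
      show (4:ℚ_[p]) = 2^2 by norm_num, norm_pow, h2n]
    norm_num
  have hc41 : ‖c4 - 1‖ = 1 := by
    have he : c4 - 1 = ((-3) + δ*(δ+2))/4 := by rw [hc4']; ring
    have hsmall : ‖δ*(δ+2)‖ < 1 := by
      rw [norm_mul]
      calc ‖δ‖*‖δ+2‖ ≤ (p:ℝ)^(-1:ℤ) * 1 :=
            mul_le_mul hδn hδ2n (norm_nonneg _) (zpow_nonneg (le_of_lt hp0) _)
        _ < 1 := by rw [mul_one]; exact hpinv1
    rw [he, norm_div, norm_add_eq_left (by rw [norm_neg, h3n]; exact hsmall), norm_neg, h3n,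
      show (4:ℚ_[p]) = 2^2 by norm_num, norm_pow, h2n]
    norm_num
  -- main congruences
  have f1 : ‖S3 - (p:ℚ_[p]) * b3‖ ≤ (p:ℝ)^(-2:ℤ) := by
    rw [hS3def, hb3def]
    exact master hp5 (Nat.even_iff.mpr (by omega)) (by omega)
  have f2 : ‖S4 - (p:ℚ_[p]) * b4‖ ≤ (p:ℝ)^(-2:ℤ) := by
    rw [hS4def, hb4def]
    exact master hp5 (Nat.even_iff.mpr (by omega)) (by omega)
  have f3 : ‖(c - 1) * S3 - m3 * (p:ℚ_[p]) * d * U3‖ ≤ (p:ℝ)^(-2:ℤ) := by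
    have h := voronoi (p := p) hp5 (n := p-3) (by omega)
    rw [show p-3-1 = p-4 by omega] at h
    rw [hcdef, hS3def, hm3def, hddef, hU3def, hMdef]
    exact h
  have f4 : ‖(c4 - 1) * S4 - m4 * (p:ℚ_[p]) * d4 * U4‖ ≤ (p:ℝ)^(-2:ℤ) := by
    have h := voronoi (p := p) hp5 (n := 2*p-4) (by omega)
    rw [show 2*p-4-1 = 2*p-5 by omega] at h
    rw [hc4def, hS4def, hm4def, hd4def, hU4def, hMdef]
    exact h
  have f5 : ‖U4 - U3‖ ≤ (p:ℝ)^(-1:ℤ) := by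
    rw [hU4def, hU3def, ← Finset.sum_sub_distrib]
    refine norm_sum_le' _ _ (zpow_nonneg (le_of_lt hp0) _) fun i hi => ?_
    simp only [Finset.mem_Icc] at hi
    have he : (i:ℚ_[p])^(2*p-5) - (i:ℚ_[p])^(p-4)
        = (i:ℚ_[p])^(p-4) * ((i:ℚ_[p])^(p-1) - 1) := by
      rw [mul_sub, ← pow_add, mul_one, show p-4+(p-1) = 2*p-5 by omega]
    rw [he, norm_mul]
    calc ‖(i:ℚ_[p])^(p-4)‖ * ‖(i:ℚ_[p])^(p-1) - 1‖ ≤ 1 * ((p:ℝ)^(-1:ℤ)) := by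
          apply mul_le_mul _ (fermat (not_dvd_small (by omega) (by omega))) (norm_nonneg _)
            zero_le_one
          rw [norm_pow]; exact pow_le_one₀ (norm_nonneg _) (norm_nat_le_one i)
      _ = (p:ℝ)^(-1:ℤ) := one_mul _
  -- divide by p
  have Y1 : ‖(c-1)*b3 - m3*d*U3‖ ≤ (p:ℝ)^(-1:ℤ) := by
    apply div_p
    have he : (p:ℚ_[p]) * ((c-1)*b3 - m3*d*U3)
        = ((c-1)*((p:ℚ_[p])*b3) - (c-1)*S3) + ((c-1)*S3 - m3*(p:ℚ_[p])*d*U3) := by ring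
    rw [he, show (-1:ℤ)-1 = -2 by norm_num]
    refine nadd ?_ f3
    have he2 : (c-1)*((p:ℚ_[p])*b3) - (c-1)*S3 = -((c-1)*(S3 - (p:ℚ_[p])*b3)) := by ring
    rw [he2, norm_neg, norm_mul, hc1, one_mul]
    exact f1
  have Y2 : ‖(c4-1)*b4 - m4*d4*U4‖ ≤ (p:ℝ)^(-1:ℤ) := by
    apply div_p
    have he : (p:ℚ_[p]) * ((c4-1)*b4 - m4*d4*U4)
        = ((c4-1)*((p:ℚ_[p])*b4) - (c4-1)*S4) + ((c4-1)*S4 - m4*(p:ℚ_[p])*d4*U4) := by ring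
    rw [he, show (-1:ℤ)-1 = -2 by norm_num]
    refine nadd ?_ f4
    have he2 : (c4-1)*((p:ℚ_[p])*b4) - (c4-1)*S4 = -((c4-1)*(S4 - (p:ℚ_[p])*b4)) := by ring
    rw [he2, norm_neg, norm_mul, hc41, one_mul]
    exact f2
  have Y2' : ‖(c4-1)*b4 - m4*d4*U3‖ ≤ (p:ℝ)^(-1:ℤ) := by
    have he : (c4-1)*b4 - m4*d4*U3 = ((c4-1)*b4 - m4*d4*U4) + m4*d4*(U4-U3) := by ring
    rw [he]
    exact nadd Y2 (cmul2 hm4n hd4n f5)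
  -- integrality of b3, b4
  have hb3 : ‖b3‖ ≤ 1 := by
    apply norm_mul_unit hc1
    have he : (c-1)*b3 = ((c-1)*b3 - m3*d*U3) + m3*d*U3 := by ring
    rw [he]
    exact nadd (le_trans Y1 hpinv_le1) (cmul2 hm3n hdn hU3n)
  have hb4 : ‖b4‖ ≤ 1 := by
    apply norm_mul_unit hc41
    have he : (c4-1)*b4 = ((c4-1)*b4 - m4*d4*U3) + m4*d4*U3 := by ring
    rw [he]
    exact nadd (le_trans Y2' hpinv_le1) (cmul2 hm4n hd4n hU3n)
  -- eliminate U3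
  have Z : ‖m3*d*(c4-1)*b4 - m4*d4*(c-1)*b3‖ ≤ (p:ℝ)^(-1:ℤ) := by
    have he : m3*d*(c4-1)*b4 - m4*d4*(c-1)*b3
        = m3*d*((c4-1)*b4 - m4*d4*U3) - m4*d4*((c-1)*b3 - m3*d*U3) := by ring
    rw [he]
    exact nsub (cmul2 hm3n hdn Y2') (cmul2 hm4n hd4n Y1)
  -- rewrite in terms of δ
  have hWeq : m3*d*(c4-1)*b4 - m4*d4*(c-1)*b3
      = ((1+δ)/32) * (m3*((-3) + δ*(δ+2))*b4 - (1+δ)*m4*((-3) + δ)*b3) := by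
    rw [hd', hc4', hd4', hc']
    ring
  have ZG : ‖m3*((-3) + δ*(δ+2))*b4 - (1+δ)*m4*((-3) + δ)*b3‖ ≤ (p:ℝ)^(-1:ℤ) := by
    apply norm_mul_unit (x := (1+δ)/32)
    · rw [norm_div, h1δn, show (32:ℚ_[p]) = 2^5 by norm_num, norm_pow, h2n]
      norm_num
    · rw [← hWeq]
      exact Z
  -- strip the δ-part
  have hG2 : ‖δ*((δ+2)*m3*b4 - (δ-2)*m4*b3)‖ ≤ (p:ℝ)^(-1:ℤ) := by
    rw [norm_mul]
    calc ‖δ‖ * ‖(δ+2)*m3*b4 - (δ-2)*m4*b3‖ ≤ (p:ℝ)^(-1:ℤ) * 1 := by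
          apply mul_le_mul hδn _ (norm_nonneg _) (zpow_nonneg (le_of_lt hp0) _)
          exact nsub (cmul2 hδ2n hm3n hb4) (cmul2 hδm2n hm4n hb3)
      _ = (p:ℝ)^(-1:ℤ) := mul_one _
  have h3mb : ‖(3:ℚ_[p])*(m4*b3 - m3*b4)‖ ≤ (p:ℝ)^(-1:ℤ) := by
    have he : (3:ℚ_[p])*(m4*b3 - m3*b4)
        = (m3*((-3) + δ*(δ+2))*b4 - (1+δ)*m4*((-3) + δ)*b3)
          - δ*((δ+2)*m3*b4 - (δ-2)*m4*b3) := by ring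
    rw [he]
    exact nsub ZG hG2
  have hmb : ‖m4*b3 - m3*b4‖ ≤ (p:ℝ)^(-1:ℤ) := norm_mul_unit h3n h3mb
  -- final
  have hm3' : m3 = (p:ℚ_[p]) - 3 := by
    rw [hm3def, Nat.cast_sub (by omega)]
    norm_num
  have hm4' : m4 = 2*(p:ℚ_[p]) - 4 := by
    rw [hm4def, Nat.cast_sub (by omega)]
    push_cast
    ring
  have hfin : 4*b3 - 3*b4 = -(m4*b3 - m3*b4) + (p:ℚ_[p])*(2*b3 - b4) := by
    rw [hm3', hm4']
    ring
  refine ⟨hb3, hb4, ?_⟩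
  rw [hfin]
  refine nadd (by rw [norm_neg]; exact hmb) ?_
  rw [norm_mul, Padic.norm_p]
  calc (p:ℝ)⁻¹ * ‖2*b3 - b4‖ ≤ (p:ℝ)⁻¹ * 1 := by
        apply mul_le_mul_of_nonneg_left _ (by positivity)
        refine nsub ?_ hb4
        rw [norm_mul]
        calc ‖(2:ℚ_[p])‖*‖b3‖ ≤ 1*1 := mul_le_mul (le_of_eq h2n) hb3 (norm_nonneg _) zero_le_one
          _ = 1 := by norm_num
    _ = (p:ℝ)^(-1:ℤ) := by rw [mul_one, zpow_neg, zpow_one]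

/-- `harmonic' k m` is the `k`-th harmonic number of order `m`: `∑_{i=1}^k 1/i^m`. -/
def harmonic' (k m : ℕ) : ℚ := ∑ i ∈ Finset.Icc 1 k, 1 / (i : ℚ) ^ m

lemma reflect_sum (f : ℕ → ℚ_[p]) :
    ∑ i ∈ Icc 1 (p-1), f (p-i) = ∑ i ∈ Icc 1 (p-1), f i := by
  have hp1 : 1 ≤ p := hp.out.pos
  refine Finset.sum_nbij' (fun i => p - i) (fun i => p - i) ?_ ?_ ?_ ?_ ?_ <;>
    intro a ha <;> simp only [Finset.mem_Icc] at * <;> omega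

lemma harmonic_cast (k m : ℕ) :
    ((harmonic' k m : ℚ) : ℚ_[p]) = ∑ i ∈ Icc 1 k, 1/((i:ℚ_[p])^m) := by
  rw [harmonic']
  push_cast
  rfl

lemma norm_two_le (hp3 : 3 ≤ p) : ‖(2:ℚ_[p])‖ = 1 := by
  have := norm_unit (p := p) (i := 2) (not_dvd_small (by norm_num) (by omega))
  push_cast at this
  exact this

lemma norm_three_le (hp4 : 4 ≤ p) : ‖(3:ℚ_[p])‖ = 1 := by
  have := norm_unit (p := p) (i := 3) (not_dvd_small (by norm_num) (by omega))
  push_cast at this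
  exact this

lemma normp1 : ‖((p:ℕ):ℚ_[p])‖ = (p:ℝ)^(-1:ℤ) := by
  rw [Padic.norm_p, zpow_neg, zpow_one]

lemma H3_bound (hp5 : 5 ≤ p) :
    ‖((harmonic' (p-1) 3 : ℚ) : ℚ_[p])‖ ≤ (p:ℝ)^(-1:ℤ) := by
  have hp0 : (0:ℝ) < p := by exact_mod_cast hp.out.pos
  have h2n : ‖(2:ℚ_[p])‖ = 1 := norm_two_le (by omega)
  have h3le : ‖(3:ℚ_[p])‖ ≤ 1 := le_of_eq (norm_three_le (by omega))
  have hrefl := reflect_sum (p := p) (fun j => 1/((j:ℚ_[p])^3))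
  have key : (2:ℚ_[p]) * ((harmonic' (p-1) 3 : ℚ) : ℚ_[p])
      = ∑ i ∈ Icc 1 (p-1), (1/((i:ℚ_[p])^3) + 1/((((p-i:ℕ)):ℚ_[p])^3)) := by
    rw [Finset.sum_add_distrib, hrefl, harmonic_cast]
    ring
  have hnorm : ‖(2:ℚ_[p]) * ((harmonic' (p-1) 3 : ℚ) : ℚ_[p])‖ ≤ (p:ℝ)^(-1:ℤ) := by
    rw [key]
    refine norm_sum_le' _ _ (zpow_nonneg (le_of_lt hp0) _) fun i hi => ?_
    simp only [Finset.mem_Icc] at hi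
    have hxu : ‖(i:ℚ_[p])‖ = 1 := norm_unit (not_dvd_small (by omega) (by omega))
    have hyu : ‖((p-i:ℕ):ℚ_[p])‖ = 1 := norm_unit (not_dvd_small (by omega) (by omega))
    have hxne : (i:ℚ_[p]) ≠ 0 := Nat.cast_ne_zero.mpr (by omega)
    have hyne : ((p-i:ℕ):ℚ_[p]) ≠ 0 := Nat.cast_ne_zero.mpr (by omega)
    have hy : ((p-i:ℕ):ℚ_[p]) = (p:ℚ_[p]) - (i:ℚ_[p]) := by
      push_cast [Nat.cast_sub (show i ≤ p by omega)]
      ring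
    have hid : 1/((i:ℚ_[p])^3) + 1/(((p-i:ℕ):ℚ_[p])^3)
        = ((p:ℚ_[p]) * ((p:ℚ_[p])^2 - 3*(p:ℚ_[p])*(i:ℚ_[p]) + 3*(i:ℚ_[p])^2))
          / ((i:ℚ_[p])^3 * (((p-i:ℕ)):ℚ_[p])^3) := by
      rw [hy] at hyne ⊢
      field_simp
      ring
    rw [hid, norm_div, norm_mul, norm_mul, norm_pow, norm_pow, hxu, hyu, normp1]
    have hg : ‖(p:ℚ_[p])^2 - 3*(p:ℚ_[p])*(i:ℚ_[p]) + 3*(i:ℚ_[p])^2‖ ≤ 1 := by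
      refine nadd (nsub ?_ ?_) ?_
      · rw [norm_pow]
        exact pow_le_one₀ (norm_nonneg _) (norm_nat_le_one p)
      · exact cmul2 h3le (norm_nat_le_one p) (le_of_eq hxu)
      · rw [mul_comm]
        calc ‖(i:ℚ_[p])^2 * 3‖ = ‖(i:ℚ_[p])‖^2 * ‖(3:ℚ_[p])‖ := by rw [norm_mul, norm_pow]
          _ ≤ 1 := by rw [hxu]; simpa using h3le
    have := mul_le_mul_of_nonneg_left hg (zpow_nonneg (le_of_lt hp0) (-1:ℤ))
    simpa using this
  calc ‖((harmonic' (p-1) 3 : ℚ) : ℚ_[p])‖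
      = ‖(2:ℚ_[p]) * ((harmonic' (p-1) 3 : ℚ) : ℚ_[p])‖ := by rw [norm_mul, h2n, one_mul]
    _ ≤ (p:ℝ)^(-1:ℤ) := hnorm

lemma H2_key (hp5 : 5 ≤ p) :
    ‖((harmonic' (p-1) 2 : ℚ) : ℚ_[p]) - (2:ℚ_[p])/3 * (p:ℚ_[p]) * Bp p (p-3)‖
      ≤ (p:ℝ)^(-2:ℤ) := by
  have hp0 : (0:ℝ) < p := by exact_mod_cast hp.out.pos
  obtain ⟨hb3, hb4, hkum⟩ := kummer_all hp5
  have f1 : ‖(∑ k ∈ range p, (k:ℚ_[p])^(p-3)) - (p:ℚ_[p]) * Bp p (p-3)‖ ≤ (p:ℝ)^(-2:ℤ) := by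
    have hodd : p % 2 = 1 := Nat.odd_iff.mp (hp.out.odd_of_ne_two (by omega))
    exact master hp5 (Nat.even_iff.mpr (by omega)) (by omega)
  have f2 : ‖(∑ k ∈ range p, (k:ℚ_[p])^(2*p-4)) - (p:ℚ_[p]) * Bp p (2*p-4)‖ ≤ (p:ℝ)^(-2:ℤ) :=
    master hp5 (Nat.even_iff.mpr (by omega)) (by omega)
  have hS3 : (∑ k ∈ range p, (k:ℚ_[p])^(p-3)) = ∑ i ∈ Icc 1 (p-1), (i:ℚ_[p])^(p-3) :=
    range_to_Icc _ (by simp [zero_pow (show p-3 ≠ 0 by omega)])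
  have hS4 : (∑ k ∈ range p, (k:ℚ_[p])^(2*p-4)) = ∑ i ∈ Icc 1 (p-1), (i:ℚ_[p])^(2*p-4) :=
    range_to_Icc _ (by simp [zero_pow (show 2*p-4 ≠ 0 by omega)])
  -- step a : H2 close to 2*S3 - S4
  have stepa : ‖((harmonic' (p-1) 2 : ℚ) : ℚ_[p])
      - (2 * (∑ k ∈ range p, (k:ℚ_[p])^(p-3)) - (∑ k ∈ range p, (k:ℚ_[p])^(2*p-4)))‖
      ≤ (p:ℝ)^(-2:ℤ) := by
    rw [harmonic_cast, hS3, hS4, Finset.mul_sum, ← Finset.sum_sub_distrib,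
      ← Finset.sum_sub_distrib]
    refine norm_sum_le' _ _ (zpow_nonneg (le_of_lt hp0) _) fun i hi => ?_
    simp only [Finset.mem_Icc] at hi
    have hxne : (i:ℚ_[p]) ≠ 0 := Nat.cast_ne_zero.mpr (by omega)
    have hxu : ‖(i:ℚ_[p])‖ = 1 := norm_unit (not_dvd_small (by omega) (by omega))
    have e1 : (i:ℚ_[p])^(2*p-4) * (i:ℚ_[p])^2 = (i:ℚ_[p])^(p-1) * (i:ℚ_[p])^(p-1) := by
      rw [← pow_add, ← pow_add]; congr 1; omega
    have e2 : (i:ℚ_[p])^(p-3) * (i:ℚ_[p])^2 = (i:ℚ_[p])^(p-1) := by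
      rw [← pow_add]; congr 1; omega
    have hid : 1/((i:ℚ_[p])^2) - (2 * (i:ℚ_[p])^(p-3) - (i:ℚ_[p])^(2*p-4))
        = ((i:ℚ_[p])^(p-1) - 1)^2 / (i:ℚ_[p])^2 := by
      rw [eq_div_iff (pow_ne_zero 2 hxne), sub_mul, one_div,
        inv_mul_cancel₀ (pow_ne_zero 2 hxne)]
      linear_combination e1 - 2*e2
    rw [hid, norm_div, norm_pow, norm_pow, hxu, one_pow, div_one]
    have hfer : ‖(i:ℚ_[p])^(p-1) - 1‖ ≤ (p:ℝ)^(-1:ℤ) :=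
      fermat (not_dvd_small (by omega) (by omega))
    calc ‖(i:ℚ_[p])^(p-1) - 1‖^2
        ≤ ((p:ℝ)^(-1:ℤ))^2 := pow_le_pow_left₀ (norm_nonneg _) hfer 2
      _ = (p:ℝ)^(-2:ℤ) := by
          rw [← zpow_natCast (((p:ℝ))^(-1:ℤ)), ← zpow_mul]
          norm_num
  -- step b : 2*S3 - S4 close to 2*p*b3 - p*b4
  have stepb : ‖(2 * (∑ k ∈ range p, (k:ℚ_[p])^(p-3)) - (∑ k ∈ range p, (k:ℚ_[p])^(2*p-4)))
      - (2 * ((p:ℚ_[p]) * Bp p (p-3)) - (p:ℚ_[p]) * Bp p (2*p-4))‖ ≤ (p:ℝ)^(-2:ℤ) := by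
    have he : (2 * (∑ k ∈ range p, (k:ℚ_[p])^(p-3)) - (∑ k ∈ range p, (k:ℚ_[p])^(2*p-4)))
        - (2 * ((p:ℚ_[p]) * Bp p (p-3)) - (p:ℚ_[p]) * Bp p (2*p-4))
        = 2 * ((∑ k ∈ range p, (k:ℚ_[p])^(p-3)) - (p:ℚ_[p]) * Bp p (p-3))
          - ((∑ k ∈ range p, (k:ℚ_[p])^(2*p-4)) - (p:ℚ_[p]) * Bp p (2*p-4)) := by ring
    rw [he]
    refine nsub ?_ f2
    rw [norm_mul, norm_two_le (by omega), one_mul]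
    exact f1
  -- step c : 2*p*b3 - p*b4 close to target
  have stepc : ‖(2 * ((p:ℚ_[p]) * Bp p (p-3)) - (p:ℚ_[p]) * Bp p (2*p-4))
      - (2:ℚ_[p])/3 * (p:ℚ_[p]) * Bp p (p-3)‖ ≤ (p:ℝ)^(-2:ℤ) := by
    have h3ne : (3:ℚ_[p]) ≠ 0 := by
      intro h
      have := norm_three_le (p := p) (by omega)
      rw [h] at this
      simp at this
    have he : (2 * ((p:ℚ_[p]) * Bp p (p-3)) - (p:ℚ_[p]) * Bp p (2*p-4))
        - (2:ℚ_[p])/3 * (p:ℚ_[p]) * Bp p (p-3)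
        = (p:ℚ_[p]) / 3 * (4 * Bp p (p-3) - 3 * Bp p (2*p-4)) := by
      field_simp
      ring
    rw [he, norm_mul, norm_div, norm_three_le (by omega), div_one, normp1]
    calc (p:ℝ)^(-1:ℤ) * ‖4 * Bp p (p-3) - 3 * Bp p (2*p-4)‖
        ≤ (p:ℝ)^(-1:ℤ) * (p:ℝ)^(-1:ℤ) :=
          mul_le_mul_of_nonneg_left hkum (zpow_nonneg (le_of_lt hp0) _)
      _ = (p:ℝ)^(-2:ℤ) := by
          rw [← zpow_add₀ (ne_of_gt hp0)]
          norm_num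
  exact tri3 (tri3 stepa stepb) stepc

lemma H2_small (hp5 : 5 ≤ p) :
    ‖((harmonic' (p-1) 2 : ℚ) : ℚ_[p])‖ ≤ (p:ℝ)^(-1:ℤ) := by
  have hp0 : (0:ℝ) < p := by exact_mod_cast hp.out.pos
  have hp1 : (1:ℝ) < p := by exact_mod_cast hp.out.one_lt
  obtain ⟨hb3, _, _⟩ := kummer_all hp5
  refine tri0 (b := (2:ℚ_[p])/3 * (p:ℚ_[p]) * Bp p (p-3)) ?_ ?_
  · exact le_trans (H2_key hp5) (zpow_le_zpow_right₀ (le_of_lt hp1) (by norm_num))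
  · rw [norm_mul, norm_mul, norm_div, norm_two_le (by omega), norm_three_le (by omega), normp1]
    calc 1/1 * (p:ℝ)^(-1:ℤ) * ‖Bp p (p-3)‖ ≤ 1/1 * (p:ℝ)^(-1:ℤ) * 1 := by
          apply mul_le_mul_of_nonneg_left hb3 (by positivity)
      _ = (p:ℝ)^(-1:ℤ) := by norm_num

lemma H1_bound (hp5 : 5 ≤ p) :
    ‖((harmonic' (p-1) 1 : ℚ) : ℚ_[p])‖ ≤ (p:ℝ)^(-2:ℤ) := by
  have hp0 : (0:ℝ) < p := by exact_mod_cast hp.out.pos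
  have h2n : ‖(2:ℚ_[p])‖ = 1 := norm_two_le (by omega)
  set V := ∑ i ∈ Icc 1 (p-1), 1/((i:ℚ_[p]) * (((p-i:ℕ)):ℚ_[p])) with hVdef
  have hparts : ∀ i ∈ Icc 1 (p-1),
      (i:ℚ_[p]) ≠ 0 ∧ ((p-i:ℕ):ℚ_[p]) ≠ 0 ∧ ‖(i:ℚ_[p])‖ = 1 ∧ ‖((p-i:ℕ):ℚ_[p])‖ = 1 ∧
      ((p-i:ℕ):ℚ_[p]) = (p:ℚ_[p]) - (i:ℚ_[p]) := by
    intro i hi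
    simp only [Finset.mem_Icc] at hi
    refine ⟨Nat.cast_ne_zero.mpr (by omega), Nat.cast_ne_zero.mpr (by omega),
      norm_unit (not_dvd_small (by omega) (by omega)),
      norm_unit (not_dvd_small (by omega) (by omega)), ?_⟩
    push_cast [Nat.cast_sub (show i ≤ p by omega)]
    ring
  have key : (2:ℚ_[p]) * ((harmonic' (p-1) 1 : ℚ) : ℚ_[p]) = (p:ℚ_[p]) * V := by
    have hrefl := reflect_sum (p := p) (fun j => 1/((j:ℚ_[p])^1))
    calc (2:ℚ_[p]) * ((harmonic' (p-1) 1 : ℚ) : ℚ_[p])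
        = ∑ i ∈ Icc 1 (p-1), (1/((i:ℚ_[p])^1) + 1/((((p-i:ℕ)):ℚ_[p])^1)) := by
          rw [Finset.sum_add_distrib, hrefl, harmonic_cast]; ring
      _ = ∑ i ∈ Icc 1 (p-1), (p:ℚ_[p]) * (1/((i:ℚ_[p]) * (((p-i:ℕ)):ℚ_[p]))) := by
          refine Finset.sum_congr rfl fun i hi => ?_
          obtain ⟨hxne, hyne, _, _, hy⟩ := hparts i hi
          rw [hy] at hyne ⊢
          field_simp
          ring
      _ = (p:ℚ_[p]) * V := by rw [hVdef, Finset.mul_sum]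
  have hVH2 : ‖V + ((harmonic' (p-1) 2 : ℚ) : ℚ_[p])‖ ≤ (p:ℝ)^(-1:ℤ) := by
    rw [hVdef, harmonic_cast, ← Finset.sum_add_distrib]
    refine norm_sum_le' _ _ (zpow_nonneg (le_of_lt hp0) _) fun i hi => ?_
    obtain ⟨hxne, hyne, hxu, hyu, hy⟩ := hparts i hi
    have hid : 1/((i:ℚ_[p]) * (((p-i:ℕ)):ℚ_[p])) + 1/((i:ℚ_[p])^2)
        = (p:ℚ_[p]) * (1 / ((i:ℚ_[p])^2 * (((p-i:ℕ)):ℚ_[p]))) := by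
      rw [hy] at hyne ⊢
      field_simp
      ring
    rw [hid, norm_mul, normp1, norm_div, norm_one, norm_mul, norm_pow, hxu, hyu]
    norm_num
  have hV : ‖V‖ ≤ (p:ℝ)^(-1:ℤ) := by
    have he : V = (V + ((harmonic' (p-1) 2 : ℚ) : ℚ_[p])) - ((harmonic' (p-1) 2 : ℚ) : ℚ_[p]) := by
      ring
    rw [he]
    exact nsub hVH2 (H2_small hp5)
  calc ‖((harmonic' (p-1) 1 : ℚ) : ℚ_[p])‖
      = ‖(2:ℚ_[p]) * ((harmonic' (p-1) 1 : ℚ) : ℚ_[p])‖ := by rw [norm_mul, h2n, one_mul]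
    _ = ‖(p:ℚ_[p])‖ * ‖V‖ := by rw [key, norm_mul]
    _ ≤ (p:ℝ)^(-1:ℤ) * (p:ℝ)^(-1:ℤ) := by
        rw [normp1]
        exact mul_le_mul_of_nonneg_left hV (zpow_nonneg (le_of_lt hp0) _)
    _ = (p:ℝ)^(-2:ℤ) := by
        rw [← zpow_add₀ (ne_of_gt hp0)]
        norm_num

lemma harmonic'_succ (N m : ℕ) :
    harmonic' (N+1) m = harmonic' N m + 1/((N:ℚ)+1)^m := by
  rw [harmonic', harmonic', Finset.sum_Icc_succ_top (by omega)]
  push_cast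
  ring

lemma sum_swap_id (N : ℕ) :
    ∑ k ∈ range (N+1), (k:ℚ) * harmonic' k 3
      = (((N:ℚ)+1)*N/2) * harmonic' N 3 - harmonic' N 1 / 2 + harmonic' N 2 / 2 := by
  induction N with
  | zero => simp [harmonic']
  | succ N ih =>
    have hN1 : ((N:ℚ)+1) ≠ 0 := by positivity
    rw [Finset.sum_range_succ, ih, harmonic'_succ, harmonic'_succ, harmonic'_succ]
    push_cast
    field_simp
    ring

theorem stmt_5 (p : ℕ) [hp : Fact p.Prime] (hp3 : 3 < p) :
    ‖((∑ k ∈ Finset.range p, (k : ℚ) * harmonic' k 3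
        - 1 / 3 * (p : ℚ) * bernoulli (p - 3) : ℚ) : ℚ_[p])‖ ≤ (p : ℝ) ^ (-2 : ℤ) := by
  have h4 : p ≠ 4 := by
    intro h
    rw [h] at hp
    exact absurd hp.out (by norm_num)
  have hp5 : 5 ≤ p := by
    have := hp.out.two_le
    omega
  have hp0 : (0:ℝ) < p := by exact_mod_cast hp.out.pos
  have hid := sum_swap_id (p-1)
  rw [show p-1+1 = p by omega] at hid
  rw [hid]
  have hcast : (((p-1:ℕ):ℚ)) = (p:ℚ) - 1 := by
    push_cast [Nat.cast_sub (show 1 ≤ p by omega)]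
    ring
  have hmain : (((((p-1:ℕ):ℚ)+1)*((p-1:ℕ):ℚ)/2 * harmonic' (p-1) 3 - harmonic' (p-1) 1 / 2
        + harmonic' (p-1) 2 / 2 - 1/3*(p:ℚ)*bernoulli (p-3) : ℚ) : ℚ_[p])
      = ((p:ℚ_[p]) * (((p:ℚ_[p])-1)/2) * ((harmonic' (p-1) 3 : ℚ) : ℚ_[p]))
        + (-(((harmonic' (p-1) 1 : ℚ) : ℚ_[p])/2))
        + ((((harmonic' (p-1) 2 : ℚ) : ℚ_[p]) - (2:ℚ_[p])/3 * (p:ℚ_[p]) * Bp p (p-3))/2) := by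
    rw [hcast]
    simp only [Bp]
    push_cast
    ring
  rw [hmain]
  refine nadd (nadd ?_ ?_) ?_
  · rw [norm_mul, norm_mul, normp1]
    have h1 : ‖((p:ℚ_[p])-1)/2‖ ≤ 1 := by
      rw [norm_div, norm_two_le (by omega), div_one]
      exact nsub (norm_nat_le_one p) (le_of_eq norm_one)
    calc (p:ℝ)^(-1:ℤ) * ‖((p:ℚ_[p])-1)/2‖ * ‖((harmonic' (p-1) 3 : ℚ) : ℚ_[p])‖
        ≤ (p:ℝ)^(-1:ℤ) * 1 * (p:ℝ)^(-1:ℤ) := by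
          apply mul_le_mul (mul_le_mul le_rfl h1 (norm_nonneg _) (by positivity))
            (H3_bound hp5) (norm_nonneg _) (by positivity)
      _ = (p:ℝ)^(-2:ℤ) := by
          rw [mul_one, ← zpow_add₀ (ne_of_gt hp0)]
          norm_num
  · rw [norm_neg, norm_div, norm_two_le (by omega), div_one]
    exact H1_bound hp5
  · rw [norm_div, norm_two_le (by omega), div_one]
    exact H2_key hp5
end

section
/- For any prime p > 3, the sum over k from 0 to p-1 of k·H_k^{(4)} is congruent to 0 modulo p. -/
lemma aux_inv_pow (p : ℕ) [hp : Fact p.Prime] (m : ℕ) (hm0 : 0 < m) (hm : m < p - 1) :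
    ∑ i ∈ Finset.Icc 1 (p - 1), ((i : ZMod p)⁻¹) ^ m = 0 := by
  have hp1 : 1 < p := hp.out.one_lt
  have h1 : ∑ i ∈ Finset.Icc 1 (p - 1), ((i : ZMod p)⁻¹) ^ m
      = ∑ x ∈ (Finset.univ \ {0} : Finset (ZMod p)), x ^ m := by
    refine Finset.sum_nbij' (fun i => ((i : ZMod p))⁻¹) (fun x => (x⁻¹).val) ?_ ?_ ?_ ?_ ?_
    · intro a ha
      simp only [Finset.mem_Icc] at ha
      have hne : (a : ZMod p) ≠ 0 := by
        rw [Ne, ZMod.natCast_eq_zero_iff]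
        intro hdvd
        have := Nat.le_of_dvd (by omega) hdvd
        omega
      simp [inv_ne_zero hne]
    · intro x hx
      simp only [Finset.mem_sdiff, Finset.mem_univ, Finset.mem_singleton, true_and] at hx
      have hne : x⁻¹ ≠ 0 := inv_ne_zero hx
      have hval : (x⁻¹).val ≠ 0 := by
        simpa [ZMod.val_eq_zero] using hne
      have hlt : (x⁻¹).val < p := ZMod.val_lt _
      simp only [Finset.mem_Icc]
      omega
    · intro a ha
      simp only [Finset.mem_Icc] at ha
      have hlt : a < p := by omega
      show ((a : ZMod p)⁻¹)⁻¹.val = a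
      rw [inv_inv, ZMod.val_natCast_of_lt hlt]
    · intro x hx
      show (((x⁻¹).val : ℕ) : ZMod p)⁻¹ = x
      rw [ZMod.natCast_val, ZMod.cast_id, inv_inv]
    · intro a ha
      rfl
  rw [h1]
  have h2 : ∑ x ∈ (Finset.univ \ {0} : Finset (ZMod p)), x ^ m = ∑ x : ZMod p, x ^ m := by
    rw [← Finset.sum_sdiff (Finset.subset_univ ({0} : Finset (ZMod p)))]
    simp [zero_pow hm0.ne']
  rw [h2]
  exact FiniteField.sum_pow_lt_card_sub_one (K := ZMod p) m (by rwa [ZMod.card])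

lemma aux_gauss (p i : ℕ) (hi : i ≤ p) :
    (∑ k ∈ Finset.Ico i p, k) * 2 + i * i + p = p * p + i := by
  have h1 : ∑ k ∈ Finset.range i, k + ∑ k ∈ Finset.Ico i p, k = ∑ k ∈ Finset.range p, k := by
    rw [Finset.range_eq_Ico, Finset.range_eq_Ico]
    exact Finset.sum_Ico_consecutive (fun k : ℕ => k) (Nat.zero_le i) hi
  have h2 := Finset.sum_range_id_mul_two i
  have h3 := Finset.sum_range_id_mul_two p
  have e2 : i * (i - 1) + i = i * i := by
    cases i with
    | zero => simp
    | succ n => simp only [Nat.succ_sub_one]; ring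
  have e3 : p * (p - 1) + p = p * p := by
    cases p with
    | zero => simp
    | succ n => simp only [Nat.succ_sub_one]; ring
  omega

lemma zmod_sum_eq_zero (p : ℕ) [hp : Fact p.Prime] (hp3 : 3 < p) :
    ∑ k ∈ Finset.range p, (k : ZMod p) * ∑ i ∈ Finset.Icc 1 k, 1 / (i : ZMod p) ^ 4 = 0 := by
  have hp5 : 5 ≤ p := by
    have h4 : p ≠ 4 := by
      intro h
      rw [h] at hp
      exact absurd hp.out (by norm_num)
    omega
  have hswap : ∑ k ∈ Finset.range p, (k : ZMod p) * ∑ i ∈ Finset.Icc 1 k, 1 / (i : ZMod p) ^ 4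
      = ∑ i ∈ Finset.Icc 1 (p - 1), (1 / (i : ZMod p) ^ 4) * ∑ k ∈ Finset.Ico i p, (k : ZMod p) := by
    rw [show (∑ k ∈ Finset.range p, (k : ZMod p) * ∑ i ∈ Finset.Icc 1 k, 1 / (i : ZMod p) ^ 4)
        = ∑ k ∈ Finset.range p, ∑ i ∈ Finset.Icc 1 k, (1 / (i : ZMod p) ^ 4) * (k : ZMod p) by
      refine Finset.sum_congr rfl fun k _ => ?_
      rw [Finset.mul_sum]
      exact Finset.sum_congr rfl fun i _ => by ring]
    rw [Finset.sum_comm' (t' := Finset.Icc 1 (p - 1)) (s' := fun i => Finset.Ico i p)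
      (fun k i => by
        simp only [Finset.mem_range, Finset.mem_Icc, Finset.mem_Ico]; omega)]
    exact Finset.sum_congr rfl fun i _ => (Finset.mul_sum _ _ _).symm
  rw [hswap]
  have h2ne : (2 : ZMod p) ≠ 0 := by
    have : ((2 : ℕ) : ZMod p) ≠ 0 := by
      rw [Ne, ZMod.natCast_eq_zero_iff]
      intro hdvd
      have := Nat.le_of_dvd (by norm_num) hdvd
      omega
    simpa using this
  have key : (∑ i ∈ Finset.Icc 1 (p - 1),
        (1 / (i : ZMod p) ^ 4) * ∑ k ∈ Finset.Ico i p, (k : ZMod p)) * 2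
      = ∑ i ∈ Finset.Icc 1 (p - 1), (((i : ZMod p)⁻¹) ^ 3 - ((i : ZMod p)⁻¹) ^ 2) := by
    rw [Finset.sum_mul]
    refine Finset.sum_congr rfl fun i hi => ?_
    simp only [Finset.mem_Icc] at hi
    have hine : (i : ZMod p) ≠ 0 := by
      rw [Ne, ZMod.natCast_eq_zero_iff]
      intro hdvd
      have := Nat.le_of_dvd (by omega) hdvd
      omega
    have hT : (∑ k ∈ Finset.Ico i p, (k : ZMod p)) * 2 = (i : ZMod p) - (i : ZMod p) ^ 2 := by
      have hg := aux_gauss p i (by omega)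
      have hc := congrArg (Nat.cast : ℕ → ZMod p) hg
      push_cast at hc
      rw [ZMod.natCast_self] at hc
      linear_combination hc
    rw [mul_assoc, hT]
    field_simp
  rw [Finset.sum_sub_distrib, aux_inv_pow p 3 (by norm_num) (by omega),
    aux_inv_pow p 2 (by norm_num) (by omega), sub_zero] at key
  rcases mul_eq_zero.mp key with h | h
  · exact h
  · exact absurd h h2ne

theorem stmt_6 (p : ℕ) [hp : Fact p.Prime] (hp3 : 3 < p) :
    ‖((∑ k ∈ Finset.range p, (k : ℚ) * harmonic' k 4 : ℚ) : ℚ_[p])‖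
      ≤ (p : ℝ) ^ (-1 : ℤ) := by
  have hp1 : 1 < p := hp.out.one_lt
  set S : ℚ := ∑ k ∈ Finset.range p, (k : ℚ) * harmonic' k 4 with hS
  -- denominators: N * S is an integer
  set N : ℕ := ((p - 1).factorial) ^ 4 with hN
  have hpN : ¬ p ∣ N := by
    intro h
    have h2 : p ∣ (p - 1).factorial := hp.out.dvd_of_dvd_pow h
    have h3 : p ≤ p - 1 := (Nat.Prime.dvd_factorial hp.out).mp h2
    omega
  set A : ℕ := ∑ k ∈ Finset.range p, k * ∑ i ∈ Finset.Icc 1 k, N / i ^ 4 with hA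
  have hNA : (A : ℚ) = (N : ℚ) * S := by
    rw [hA, hS, Finset.mul_sum]
    push_cast
    refine Finset.sum_congr rfl fun k hk => ?_
    rw [harmonic', Finset.mul_sum]
    rw [show (k : ℚ) * ∑ i ∈ Finset.Icc 1 k, (1 : ℚ) / (i : ℚ) ^ 4
        = ∑ i ∈ Finset.Icc 1 k, (k : ℚ) * (1 / (i : ℚ) ^ 4) from Finset.mul_sum _ _ _]
    rw [Finset.mul_sum]
    refine Finset.sum_congr rfl fun i hi => ?_
    simp only [Finset.mem_Icc, Finset.mem_range] at hi hk
    have hdvd : i ^ 4 ∣ N := by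
      rw [hN]
      exact pow_dvd_pow_of_dvd (Nat.dvd_factorial (by omega) (by omega)) 4
    have hine : (i : ℚ) ≠ 0 := by
      have h0 : 0 < i := hi.1
      positivity
    rw [Nat.cast_div hdvd (by push_cast; exact pow_ne_zero _ hine)]
    push_cast
    field_simp
  have hSA : S = (A : ℚ) / (N : ℚ) := by
    have hNne : (N : ℚ) ≠ 0 := by
      have h0 : 0 < N := by positivity
      exact_mod_cast h0.ne'
    rw [hNA, mul_div_cancel_left₀ _ hNne]
  -- p divides A
  have hpA : (p : ℤ) ∣ (A : ℤ) := by
    have hnat : p ∣ A := by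
      rw [← ZMod.natCast_eq_zero_iff, hA]
      push_cast
      have hterm : ∀ k ∈ Finset.range p, (k : ZMod p) * (∑ i ∈ Finset.Icc 1 k, ((N / i ^ 4 : ℕ) : ZMod p))
          = (N : ZMod p) * ((k : ZMod p) * ∑ i ∈ Finset.Icc 1 k, 1 / (i : ZMod p) ^ 4) := by
        intro k hk
        simp only [Finset.mem_range] at hk
        rw [Finset.mul_sum, Finset.mul_sum, Finset.mul_sum]
        refine Finset.sum_congr rfl fun i hi => ?_
        simp only [Finset.mem_Icc] at hi
        have hdvd : i ^ 4 ∣ N := by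
          rw [hN]
          exact pow_dvd_pow_of_dvd (Nat.dvd_factorial (by omega) (by omega)) 4
        have hine : (i : ZMod p) ≠ 0 := by
          rw [Ne, ZMod.natCast_eq_zero_iff]
          intro h
          have := Nat.le_of_dvd (by omega) h
          omega
        have hkey : ((i ^ 4 : ℕ) : ZMod p) * ((N / i ^ 4 : ℕ) : ZMod p) = (N : ZMod p) := by
          rw [← Nat.cast_mul, Nat.mul_div_cancel' hdvd]
        have hi4 : ((i ^ 4 : ℕ) : ZMod p) ≠ 0 := by
          push_cast
          exact pow_ne_zero _ hine
        have : ((N / i ^ 4 : ℕ) : ZMod p) = (N : ZMod p) * (1 / ((i : ZMod p)) ^ 4) := by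
          rw [eq_comm, mul_one_div, div_eq_iff (pow_ne_zero 4 hine), ← hkey]
          push_cast
          ring
        rw [this]
        ring
      rw [Finset.sum_congr rfl hterm, ← Finset.mul_sum, zmod_sum_eq_zero p hp3, mul_zero]
    exact_mod_cast hnat
  -- norm bound
  rw [Padic.eq_padicNorm]
  have hnormN : padicNorm p (N : ℚ) = 1 := by
    rw [show ((N : ℚ)) = ((N : ℤ) : ℚ) by push_cast; ring]
    rw [padicNorm.int_eq_one_iff]
    exact_mod_cast hpN
  have hnormA : padicNorm p (A : ℚ) ≤ (p : ℚ) ^ (-1 : ℤ) := by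
    have := (padicNorm.dvd_iff_norm_le (p := p) (n := 1) (z := (A : ℤ))).mp (by simpa using hpA)
    simpa using this
  have : padicNorm p S ≤ (p : ℚ) ^ (-1 : ℤ) := by
    rw [hSA, padicNorm.div, hnormN, div_one]
    exact_mod_cast hnormA
  calc ((padicNorm p S : ℚ) : ℝ) ≤ (((p : ℚ) ^ (-1 : ℤ) : ℚ) : ℝ) := by exact_mod_cast this
    _ = (p : ℝ) ^ (-1 : ℤ) := by push_cast; ring
end

section
/- For any prime p > 3, the sum over k from 1 to p-1 of k times the sum over 1 ≤ i < j ≤ k of (1/(i j^3) + 1/(i^3 j)) is congruent to (1/2)·B_{p-3} modulo p. -/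
open Finset

namespace Stmt8

variable (p : ℕ) [hp : Fact p.Prime]

/-- mod-p reduction of a p-adic number (junk value 0 if not integral) -/
noncomputable def qm (x : ℚ_[p]) : ZMod p :=
  if h : ‖x‖ ≤ 1 then PadicInt.toZMod (⟨x, h⟩ : ℤ_[p]) else 0

variable {p}

lemma qm_def {x : ℚ_[p]} (h : ‖x‖ ≤ 1) : qm p x = PadicInt.toZMod (⟨x, h⟩ : ℤ_[p]) :=
  dif_pos h

lemma qm_add {x y : ℚ_[p]} (hx : ‖x‖ ≤ 1) (hy : ‖y‖ ≤ 1) :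
    qm p (x + y) = qm p x + qm p y := by
  have hxy : ‖x + y‖ ≤ 1 := le_trans (Padic.nonarchimedean x y) (max_le hx hy)
  rw [qm_def hxy, qm_def hx, qm_def hy]
  exact map_add PadicInt.toZMod (show ℤ_[p] from ⟨x, hx⟩) (show ℤ_[p] from ⟨y, hy⟩)

lemma qm_mul {x y : ℚ_[p]} (hx : ‖x‖ ≤ 1) (hy : ‖y‖ ≤ 1) :
    qm p (x * y) = qm p x * qm p y := by
  have hxy : ‖x * y‖ ≤ 1 := by
    rw [norm_mul]
    exact mul_le_one₀ hx (norm_nonneg _) hy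
  rw [qm_def hxy, qm_def hx, qm_def hy]
  exact map_mul PadicInt.toZMod (show ℤ_[p] from ⟨x, hx⟩) (show ℤ_[p] from ⟨y, hy⟩)

lemma qm_natCast (n : ℕ) : qm p (n : ℚ_[p]) = (n : ZMod p) := by
  have h : ‖(n : ℚ_[p])‖ ≤ 1 := by
    have := Padic.norm_int_le_one (p := p) (n : ℤ)
    push_cast at this
    exact this
  rw [qm_def h]
  have : (⟨(n : ℚ_[p]), h⟩ : ℤ_[p]) = (n : ℤ_[p]) := Subtype.ext (by push_cast; rfl)
  rw [this, map_natCast]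

lemma qm_one : qm p 1 = 1 := by simpa using qm_natCast (p := p) 1

lemma qm_inv {x : ℚ_[p]} (hx : ‖x‖ = 1) : qm p x⁻¹ = (qm p x)⁻¹ := by
  have hx0 : x ≠ 0 := by
    intro h; rw [h, norm_zero] at hx; norm_num at hx
  have hxi : ‖x⁻¹‖ ≤ 1 := by rw [norm_inv, hx]; norm_num
  have h1 : qm p x * qm p x⁻¹ = 1 := by
    rw [← qm_mul hx.le hxi, mul_inv_cancel₀ hx0, qm_one]
  exact (inv_eq_of_mul_eq_one_right h1).symm

lemma qm_sum {ι : Type*} {s : Finset ι} {f : ι → ℚ_[p]} (h : ∀ i ∈ s, ‖f i‖ ≤ 1) :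
    qm p (∑ i ∈ s, f i) = ∑ i ∈ s, qm p (f i) := by
  classical
  induction s using Finset.cons_induction with
  | empty =>
    have h0 : ‖(0:ℚ_[p])‖ ≤ 1 := by simp
    simp [qm_def h0]
  | cons a s ha ih =>
    rw [Finset.sum_cons, Finset.sum_cons]
    have hs : ‖∑ i ∈ s, f i‖ ≤ 1 :=
      IsUltrametricDist.norm_sum_le_of_forall_le_of_nonneg zero_le_one
        (fun i hi => h i (Finset.mem_cons_of_mem hi))
    rw [qm_add (h a (Finset.mem_cons_self a s)) hs, ih (fun i hi => h i (Finset.mem_cons_of_mem hi))]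

lemma qm_pow {x : ℚ_[p]} (hx : ‖x‖ ≤ 1) (n : ℕ) : qm p (x ^ n) = (qm p x) ^ n := by
  induction n with
  | zero => simpa using qm_one
  | succ n ih =>
    have hxn : ‖x ^ n‖ ≤ 1 := by
      rw [norm_pow]; exact pow_le_one₀ (norm_nonneg _) hx
    rw [pow_succ, pow_succ, qm_mul hxn hx, ih]

lemma qm_zero_norm_le {x : ℚ_[p]} (hx : ‖x‖ ≤ 1) (h0 : qm p x = 0) :
    ‖x‖ ≤ (p : ℝ) ^ (-1 : ℤ) := by
  set X : ℤ_[p] := ⟨x, hx⟩ with hX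
  have h1 : PadicInt.toZMod X = 0 := by rw [← qm_def hx]; exact h0
  have h2 : X ∈ Ideal.span {(p : ℤ_[p]) ^ 1} := by
    rw [pow_one, ← PadicInt.maximalIdeal_eq_span_p, ← PadicInt.ker_toZMod, RingHom.mem_ker]
    exact h1
  have h3 := (PadicInt.norm_le_pow_iff_mem_span_pow X 1).2 h2
  have : ‖X‖ = ‖x‖ := rfl
  rw [this] at h3
  exact_mod_cast h3


lemma norm_nat_le_one (n : ℕ) : ‖(n : ℚ_[p])‖ ≤ 1 := by
  have := Padic.norm_int_le_one (p := p) (n : ℤ)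
  push_cast at this
  exact this

lemma norm_nat_eq_one {n : ℕ} (hn : ¬ p ∣ n) : ‖(n : ℚ_[p])‖ = 1 := by
  refine le_antisymm (norm_nat_le_one n) ?_
  by_contra h
  push_neg at h
  have h2 : ‖((n : ℤ) : ℚ_[p])‖ < 1 := by push_cast; exact h
  rw [Padic.norm_intCast_lt_one_iff] at h2
  exact hn (by exact_mod_cast h2)

lemma not_dvd_of_lt {n : ℕ} (h1 : 0 < n) (h2 : n < p) : ¬ p ∣ n := fun h =>
  absurd (Nat.le_of_dvd h1 h) (not_le.mpr h2)

lemma bernoulli_norm_le (m : ℕ) (hm : m + 1 < p) : ‖((bernoulli m : ℚ) : ℚ_[p])‖ ≤ 1 := by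
  induction m using Nat.strong_induction_on with
  | _ m ih =>
    rcases Nat.eq_zero_or_pos m with hm0 | hm0
    · subst hm0; simp
    -- recurrence
    have hrec := sum_bernoulli (m + 1)
    rw [if_neg (by omega)] at hrec
    rw [Finset.sum_range_succ, Nat.choose_succ_self_right] at hrec
    have hqq : ((m + 1 : ℕ) : ℚ) * bernoulli m = - ∑ k ∈ Finset.range m,
        ((m+1).choose k : ℚ) * bernoulli k := by linarith [hrec]
    have hq : ((m + 1 : ℕ) : ℚ_[p]) * ((bernoulli m : ℚ) : ℚ_[p]) =
        - ∑ k ∈ Finset.range m, (((m+1).choose k : ℕ) : ℚ_[p]) * ((bernoulli k : ℚ) : ℚ_[p]) := by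
      have := congrArg (fun q : ℚ => (q : ℚ_[p])) hqq
      push_cast at this ⊢
      exact this
    have hnorm1 : ‖((m + 1 : ℕ) : ℚ_[p])‖ = 1 := norm_nat_eq_one (not_dvd_of_lt (by omega) hm)
    have hsum : ‖∑ k ∈ Finset.range m, (((m+1).choose k : ℕ) : ℚ_[p]) * ((bernoulli k : ℚ) : ℚ_[p])‖ ≤ 1 := by
      refine IsUltrametricDist.norm_sum_le_of_forall_le_of_nonneg zero_le_one ?_
      intro k hk
      rw [norm_mul]
      exact mul_le_one₀ (norm_nat_le_one _) (norm_nonneg _)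
        (ih k (Finset.mem_range.mp hk) (by have := Finset.mem_range.mp hk; omega))
    have : ‖((m + 1 : ℕ) : ℚ_[p]) * ((bernoulli m : ℚ) : ℚ_[p])‖ ≤ 1 := by
      rw [hq, norm_neg]; exact hsum
    rwa [norm_mul, hnorm1, one_mul] at this


-- ZMod side lemmas
lemma zmod_ne_zero {k : ℕ} (h1 : 0 < k) (h2 : k < p) : ((k : ZMod p)) ≠ 0 := by
  intro h
  rw [ZMod.natCast_eq_zero_iff] at h
  exact not_dvd_of_lt (p := p) h1 h2 h

lemma zmod_inv_eq_pow {k : ℕ} (hk : ((k : ZMod p)) ≠ 0) :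
    ((k : ZMod p))⁻¹ = ((k : ZMod p)) ^ (p - 2) := by
  have h1 : ((k : ZMod p)) ^ (p - 1) = 1 := ZMod.pow_card_sub_one_eq_one hk
  have h2 : p - 1 = (p - 2) + 1 := by have := hp.out.two_le; omega
  rw [h2, pow_succ] at h1
  exact inv_eq_of_mul_eq_one_left h1

lemma sum_univ_pow {m : ℕ} (hm : m ≠ 0) :
    ∑ x : ZMod p, x ^ m = if (p - 1) ∣ m then -1 else 0 := by
  classical
  have hcard : Fintype.card (ZMod p) = p := ZMod.card p
  have h0 : (Finset.univ : Finset (ZMod p)).sum (fun x => x ^ m) =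
      ∑ x ∈ Finset.univ \ {(0 : ZMod p)}, x ^ m := by
    rw [← Finset.sum_sdiff (Finset.subset_univ ({0} : Finset (ZMod p))),
      Finset.sum_singleton, zero_pow hm, add_zero]
  let φ : (ZMod p)ˣ ↪ ZMod p := ⟨fun x => x, Units.val_injective⟩
  have hmap : Finset.univ.map φ = Finset.univ \ {(0 : ZMod p)} := by
    ext x
    simp only [Finset.mem_map, Finset.mem_univ, Function.Embedding.coeFn_mk, true_and,
      Finset.mem_sdiff, Finset.mem_singleton, φ]
    exact isUnit_iff_ne_zero
  have h1 : ∑ x ∈ Finset.univ \ {(0 : ZMod p)}, x ^ m = ∑ x : (ZMod p)ˣ, ((x : ZMod p)) ^ m := by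
    rw [← hmap, Finset.sum_map]
    rfl
  rw [h0, h1]
  have := FiniteField.sum_pow_units (ZMod p) m
  rw [hcard] at this
  exact this

lemma sum_Icc_pow (m : ℕ) :
    ∑ k ∈ Finset.Icc 1 (p - 1), ((k : ZMod p)) ^ m = if (p - 1) ∣ m then -1 else 0 := by
  have hp2 := hp.out.two_le
  rcases Nat.eq_zero_or_pos m with hm | hm
  · subst hm
    simp only [pow_zero, Finset.sum_const, Nat.card_Icc, smul_eq_mul, mul_one]
    rw [if_pos (dvd_zero _)]
    have : (p - 1 + 1 - 1 : ℕ) = p - 1 := by omega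
    rw [this]
    have : ((p - 1 : ℕ) : ZMod p) = -1 := by
      have : ((p : ℕ) : ZMod p) = 0 := ZMod.natCast_self p
      push_cast [Nat.cast_sub (by omega : 1 ≤ p)]
      rw [this]; ring
    rw [nsmul_eq_mul, mul_one]
    exact_mod_cast this
  · have hIcc : Finset.Icc 1 (p - 1) = Finset.Ico 1 p := by
      rw [← Finset.Ico_add_one_right_eq_Icc]
      congr 1
      omega
    have hsplit : ∑ k ∈ Finset.range p, ((k : ZMod p)) ^ m =
        ((0 : ℕ) : ZMod p) ^ m + ∑ k ∈ Finset.Ico 1 p, ((k : ZMod p)) ^ m := by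
      rw [Finset.range_eq_Ico, Finset.sum_eq_sum_Ico_succ_bot (by omega : 0 < p)]
    have hbij : ∑ k ∈ Finset.range p, ((k : ZMod p)) ^ m = ∑ x : ZMod p, x ^ m := by
      refine Finset.sum_nbij' (i := fun k => ((k : ZMod p))) (j := fun x => x.val) ?_ ?_ ?_ ?_ ?_
      · intro a _; exact Finset.mem_univ _
      · intro a _; exact Finset.mem_range.mpr (ZMod.val_lt a)
      · intro a ha; exact ZMod.val_cast_of_lt (Finset.mem_range.mp ha)
      · intro a _; exact ZMod.natCast_rightInverse a
      · intro a _; rfl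
    rw [hIcc]
    have h0m : ((0 : ℕ) : ZMod p) ^ m = 0 := by
      rw [Nat.cast_zero, zero_pow (by omega : m ≠ 0)]
    have := sum_univ_pow (p := p) (m := m) (by omega)
    rw [← hbij, hsplit, h0m, zero_add] at this
    exact this


lemma norm_bch {t : ℕ} (ht : t < p - 1) (x : ℚ_[p]) (hx : ‖x‖ ≤ 1) (y : ℚ_[p]) (hy : ‖y‖ ≤ 1) :
    ‖((bernoulli t : ℚ) : ℚ_[p]) * x * y‖ ≤ 1 := by
  rw [norm_mul, norm_mul]
  have h1 : ‖((bernoulli t : ℚ) : ℚ_[p])‖ ≤ 1 := bernoulli_norm_le t (by omega)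
  have := mul_le_one₀ (mul_le_one₀ h1 (norm_nonneg _) hx) (norm_nonneg _) hy
  calc ‖((bernoulli t : ℚ) : ℚ_[p])‖ * ‖x‖ * ‖y‖ ≤ 1 := this

lemma faulhaber_mod (hp3 : 3 < p) (j : ℕ) :
    ∑ i ∈ Finset.range j, ((i : ZMod p)) ^ (p - 2) =
      - ∑ t ∈ Finset.range (p - 1), qm p ((bernoulli t : ℚ) : ℚ_[p]) *
        (((p - 1).choose t : ℕ) : ZMod p) * ((j : ZMod p)) ^ (p - 1 - t) := by
  have hp2 : 2 ≤ p := hp.out.two_le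
  set n := p - 1 with hn
  have hq1 : p - 2 + 1 = n := by omega
  have hrat := sum_range_pow j (p - 2)
  rw [hq1] at hrat
  have hq : (∑ i ∈ Finset.range j, ((i : ℚ_[p])) ^ (p - 2)) =
      ∑ t ∈ Finset.range n, ((bernoulli t : ℚ) : ℚ_[p]) * ((n.choose t : ℕ) : ℚ_[p]) *
        ((j : ℚ_[p])) ^ (n - t) * ((n : ℚ_[p]))⁻¹ := by
    have := congrArg (fun q : ℚ => (q : ℚ_[p])) hrat
    push_cast at this
    simp only [div_eq_mul_inv] at this
    have hc : ((p - 2 : ℕ) : ℚ_[p]) + 1 = (n : ℚ_[p]) := by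
      rw [← hq1]
      push_cast
      ring
    rw [hc] at this
    exact this
  have hnorm_j : ∀ (a m : ℕ), ‖((a : ℚ_[p])) ^ m‖ ≤ 1 := fun a m => by
    rw [norm_pow]; exact pow_le_one₀ (norm_nonneg _) (norm_nat_le_one a)
  have hpn : ¬ p ∣ n := not_dvd_of_lt (by omega) (by omega)
  have hnn : ‖((n : ℚ_[p]))‖ = 1 := norm_nat_eq_one hpn
  have hninv : ‖((n : ℚ_[p]))⁻¹‖ ≤ 1 := by rw [norm_inv, hnn]; norm_num
  have hb : ∀ t, t < n → ‖((bernoulli t : ℚ) : ℚ_[p])‖ ≤ 1 := fun t ht =>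
    bernoulli_norm_le t (by omega)
  have hbc : ∀ t, t < n → ‖((bernoulli t : ℚ) : ℚ_[p]) * ((n.choose t : ℕ) : ℚ_[p])‖ ≤ 1 := by
    intro t ht
    rw [norm_mul]
    exact mul_le_one₀ (hb t ht) (norm_nonneg _) (norm_nat_le_one _)
  have hbcj : ∀ t, t < n → ‖((bernoulli t : ℚ) : ℚ_[p]) * ((n.choose t : ℕ) : ℚ_[p]) *
      ((j : ℚ_[p])) ^ (n - t)‖ ≤ 1 := by
    intro t ht
    rw [norm_mul]
    exact mul_le_one₀ (hbc t ht) (norm_nonneg _) (hnorm_j _ _)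
  have hterm : ∀ t ∈ Finset.range n, ‖((bernoulli t : ℚ) : ℚ_[p]) * ((n.choose t : ℕ) : ℚ_[p]) *
      ((j : ℚ_[p])) ^ (n - t) * ((n : ℚ_[p]))⁻¹‖ ≤ 1 := by
    intro t ht
    rw [norm_mul]
    exact mul_le_one₀ (hbcj t (Finset.mem_range.mp ht)) (norm_nonneg _) hninv
  have hqm := congrArg (qm p) hq
  rw [qm_sum (fun i _ => hnorm_j i (p - 2)), qm_sum hterm] at hqm
  have hninvK : qm p (((n : ℚ_[p]))⁻¹) = -1 := by
    rw [qm_inv hnn, qm_natCast]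
    have h5 : ((n : ℕ) : ZMod p) = -1 := by
      have hps : ((p : ℕ) : ZMod p) = 0 := ZMod.natCast_self p
      rw [hn, Nat.cast_sub (by omega : 1 ≤ p), hps]
      ring
    rw [h5, inv_neg, inv_one]
  calc ∑ i ∈ Finset.range j, ((i : ZMod p)) ^ (p - 2)
      = ∑ i ∈ Finset.range j, qm p (((i : ℚ_[p])) ^ (p - 2)) := by
        refine Finset.sum_congr rfl fun i _ => ?_
        rw [qm_pow (norm_nat_le_one i), qm_natCast]
    _ = ∑ t ∈ Finset.range n, qm p (((bernoulli t : ℚ) : ℚ_[p]) * ((n.choose t : ℕ) : ℚ_[p]) *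
        ((j : ℚ_[p])) ^ (n - t) * ((n : ℚ_[p]))⁻¹) := hqm
    _ = ∑ t ∈ Finset.range n, qm p ((bernoulli t : ℚ) : ℚ_[p]) * ((n.choose t : ℕ) : ZMod p) *
        ((j : ZMod p)) ^ (n - t) * (-1) := by
        refine Finset.sum_congr rfl fun t ht => ?_
        have ht' := Finset.mem_range.mp ht
        rw [qm_mul (hbcj t ht') hninv, qm_mul (hbc t ht') (hnorm_j _ _),
          qm_mul (hb t ht') (norm_nat_le_one _), qm_natCast, qm_pow (norm_nat_le_one _),
          qm_natCast, hninvK]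
    _ = - ∑ t ∈ Finset.range n, qm p ((bernoulli t : ℚ) : ℚ_[p]) * ((n.choose t : ℕ) : ZMod p) *
        ((j : ZMod p)) ^ (n - t) := by
        rw [← Finset.sum_neg_distrib]
        refine Finset.sum_congr rfl fun t _ => by ring


lemma p_ge_5 (hp3 : 3 < p) : 5 ≤ p := by
  rcases Nat.lt_or_ge p 5 with h | h
  · interval_cases p
    · exact absurd hp.out (by norm_num)
  · exact h

lemma sum_inv_pow (hp3 : 3 < p) {m : ℕ} (hm1 : 1 ≤ m) (hm2 : m < p - 1) :
    ∑ k ∈ Finset.Icc 1 (p - 1), (((k : ZMod p))⁻¹) ^ m = 0 := by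
  have h1 : ∑ k ∈ Finset.Icc 1 (p - 1), (((k : ZMod p))⁻¹) ^ m =
      ∑ k ∈ Finset.Icc 1 (p - 1), ((k : ZMod p)) ^ ((p - 2) * m) := by
    refine Finset.sum_congr rfl fun k hk => ?_
    obtain ⟨hk1, hk2⟩ := Finset.mem_Icc.mp hk
    rw [zmod_inv_eq_pow (zmod_ne_zero hk1 (by omega)), ← pow_mul]
  rw [h1, sum_Icc_pow]
  rw [if_neg]
  intro hdvd
  have h2 : (p - 1) ∣ (p - 1) * m := Dvd.intro m rfl
  have h3 : (p - 1) ∣ ((p - 1) * m - (p - 2) * m) := Nat.dvd_sub h2 hdvd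
  have h4 : (p - 1) * m - (p - 2) * m = m := by
    rw [← Nat.sub_mul]
    have : p - 1 - (p - 2) = 1 := by omega
    rw [this, one_mul]
  rw [h4] at h3
  exact absurd (Nat.le_of_dvd (by omega) h3) (by omega)

lemma sum_Icc_top {j : ℕ} (hj1 : 1 ≤ j) (hj2 : j ≤ p) :
    (∑ k ∈ Finset.Icc j (p - 1), ((k : ZMod p))) * 2 = (j : ZMod p) - ((j : ZMod p)) ^ 2 := by
  have hp2 := hp.out.two_le
  have hIcc : Finset.Icc j (p - 1) = Finset.Ico j p := by
    rw [← Finset.Ico_add_one_right_eq_Icc]; congr 1; omega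
  rw [hIcc, Finset.sum_Ico_eq_sub _ hj2, sub_mul]
  have hgauss : ∀ m : ℕ, 1 ≤ m → (∑ i ∈ Finset.range m, ((i : ZMod p))) * 2 =
      ((m : ZMod p)) ^ 2 - (m : ZMod p) := by
    intro m hm
    have := congrArg (fun t : ℕ => (t : ZMod p)) (Finset.sum_range_id_mul_two m)
    push_cast at this
    rw [Nat.cast_sub hm] at this
    push_cast at this
    rw [this]
    ring
  rw [hgauss p (by omega), hgauss j hj1, ZMod.natCast_self]
  ring

lemma sq_sum_split {R : Type*} [CommRing R] (n : ℕ) (f : ℕ → R) :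
    (∑ k ∈ Finset.Icc 1 n, f k) ^ 2 = ∑ k ∈ Finset.Icc 1 n, (f k) ^ 2 +
      2 * ∑ j ∈ Finset.Icc 1 n, ∑ i ∈ Finset.Ico 1 j, f i * f j := by
  have h0 : (∑ k ∈ Finset.Icc 1 n, f k) ^ 2 =
      ∑ j ∈ Finset.Icc 1 n, ∑ i ∈ Finset.Icc 1 n, f i * f j := by
    rw [sq, Finset.sum_mul_sum]
    exact Finset.sum_comm
  have h1 : ∀ j ∈ Finset.Icc 1 n, ∑ i ∈ Finset.Icc 1 n, f i * f j =
      (∑ i ∈ Finset.Ico 1 j, f i * f j) + f j * f j + ∑ i ∈ Finset.Ico (j+1) (n+1), f i * f j := by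
    intro j hj
    obtain ⟨hj1, hj2⟩ := Finset.mem_Icc.mp hj
    have e1 : Finset.Icc 1 n = Finset.Ico 1 (n + 1) := by rw [Finset.Ico_add_one_right_eq_Icc]
    rw [e1, ← Finset.sum_Ico_consecutive _ (by omega : 1 ≤ j) (by omega : j ≤ n + 1),
      Finset.sum_eq_sum_Ico_succ_bot (by omega : j < n + 1)]
    ring
  rw [h0, Finset.sum_congr rfl h1]
  rw [Finset.sum_add_distrib, Finset.sum_add_distrib]
  have h2 : ∑ j ∈ Finset.Icc 1 n, ∑ i ∈ Finset.Ico (j+1) (n+1), f i * f j =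
      ∑ j ∈ Finset.Icc 1 n, ∑ i ∈ Finset.Ico 1 j, f i * f j := by
    rw [Finset.sum_comm' (t' := Finset.Icc 1 n) (s' := fun i => Finset.Ico 1 i)
      (fun x y => by simp only [Finset.mem_Icc, Finset.mem_Ico]; omega)]
    exact Finset.sum_congr rfl fun j _ => Finset.sum_congr rfl fun i _ => mul_comm _ _
  rw [h2]
  have h3 : ∑ j ∈ Finset.Icc 1 n, f j * f j = ∑ j ∈ Finset.Icc 1 n, (f j) ^ 2 :=
    Finset.sum_congr rfl fun j _ => (sq (f j)).symm
  rw [h3]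
  ring


lemma cast_pred_eq_neg_one : (((p - 1 : ℕ)) : ZMod p) = -1 := by
  have hp2 := hp.out.two_le
  rw [Nat.cast_sub (by omega : 1 ≤ p), ZMod.natCast_self]
  ring

lemma two_ne_zero' (hp3 : 3 < p) : (2 : ZMod p) ≠ 0 := by
  have := zmod_ne_zero (p := p) (k := 2) (by norm_num) (by omega)
  rwa [Nat.cast_ofNat] at this

lemma swap_ij {R : Type*} [AddCommMonoid R] (F : ℕ → ℕ → R) :
    ∑ j ∈ Finset.Icc 1 (p - 1), ∑ i ∈ Finset.Ico 1 j, F j i =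
      ∑ i ∈ Finset.Icc 1 (p - 1), ∑ j ∈ Finset.Icc (i + 1) (p - 1), F j i :=
  Finset.sum_comm' (fun x y => by simp only [Finset.mem_Icc, Finset.mem_Ico]; omega)

lemma V1_eq (hp3 : 3 < p) :
    ∑ j ∈ Finset.Icc 1 (p - 1), ∑ i ∈ Finset.Ico 1 j, ((i : ZMod p))⁻¹ * ((j : ZMod p))⁻¹ = 0 := by
  have h5 := p_ge_5 (p := p) hp3
  have hsq := sq_sum_split (p - 1) (fun k => ((k : ZMod p))⁻¹)
  have hS1 : ∑ k ∈ Finset.Icc 1 (p - 1), ((k : ZMod p))⁻¹ = 0 := by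
    have := sum_inv_pow (p := p) hp3 (m := 1) le_rfl (by omega)
    simpa using this
  have hS2 : ∑ k ∈ Finset.Icc 1 (p - 1), (((k : ZMod p))⁻¹) ^ 2 = 0 :=
    sum_inv_pow (p := p) hp3 (by norm_num) (by omega)
  rw [hS1, hS2] at hsq
  have h2 : (2 : ZMod p) * ∑ j ∈ Finset.Icc 1 (p - 1), ∑ i ∈ Finset.Ico 1 j,
      ((i : ZMod p))⁻¹ * ((j : ZMod p))⁻¹ = 0 := by
    linear_combination -hsq
  rcases mul_eq_zero.mp h2 with h | h
  · exact absurd h (two_ne_zero' hp3)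
  · exact h

lemma V4_eq (hp3 : 3 < p) :
    ∑ j ∈ Finset.Icc 1 (p - 1), ∑ i ∈ Finset.Ico 1 j, (((i : ZMod p))⁻¹) ^ 3 = 0 := by
  have h5 := p_ge_5 (p := p) hp3
  rw [swap_ij (fun j i => (((i : ZMod p))⁻¹) ^ 3)]
  have h1 : ∀ i ∈ Finset.Icc 1 (p - 1),
      ∑ j ∈ Finset.Icc (i + 1) (p - 1), (((i : ZMod p))⁻¹) ^ 3 =
      -(((i : ZMod p))⁻¹) ^ 3 - (((i : ZMod p))⁻¹) ^ 2 := by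
    intro i hi
    obtain ⟨hi1, hi2⟩ := Finset.mem_Icc.mp hi
    have hne : ((i : ZMod p)) ≠ 0 := zmod_ne_zero hi1 (by omega)
    rw [Finset.sum_const, Nat.card_Icc]
    have hc : p - 1 + 1 - (i + 1) = p - 1 - i := by omega
    rw [hc, nsmul_eq_mul]
    have hcast : (((p - 1 - i : ℕ)) : ZMod p) = -1 - (i : ZMod p) := by
      rw [Nat.cast_sub (by omega : i ≤ p - 1), cast_pred_eq_neg_one]
    rw [hcast]
    field_simp
  rw [Finset.sum_congr rfl h1, Finset.sum_sub_distrib, Finset.sum_neg_distrib,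
    sum_inv_pow hp3 (by norm_num) (by omega), sum_inv_pow hp3 (by norm_num) (by omega)]
  ring

lemma V3_eq (hp3 : 3 < p) :
    ∑ j ∈ Finset.Icc 1 (p - 1), ∑ i ∈ Finset.Ico 1 j, (((i : ZMod p))⁻¹) ^ 3 * ((j : ZMod p)) = 0 := by
  have h5 := p_ge_5 (p := p) hp3
  rw [swap_ij (fun j i => (((i : ZMod p))⁻¹) ^ 3 * ((j : ZMod p)))]
  have h2 : (2 : ZMod p) * ∑ i ∈ Finset.Icc 1 (p - 1),
      ∑ j ∈ Finset.Icc (i + 1) (p - 1), (((i : ZMod p))⁻¹) ^ 3 * ((j : ZMod p)) = 0 := by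
    rw [Finset.mul_sum]
    have h1 : ∀ i ∈ Finset.Icc 1 (p - 1),
        (2 : ZMod p) * ∑ j ∈ Finset.Icc (i + 1) (p - 1), (((i : ZMod p))⁻¹) ^ 3 * ((j : ZMod p)) =
        -(((i : ZMod p))⁻¹) - (((i : ZMod p))⁻¹) ^ 2 := by
      intro i hi
      obtain ⟨hi1, hi2⟩ := Finset.mem_Icc.mp hi
      have hne : ((i : ZMod p)) ≠ 0 := zmod_ne_zero hi1 (by omega)
      rw [← Finset.mul_sum]
      have hst := sum_Icc_top (p := p) (j := i + 1) (by omega) (by omega)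
      have hre : (2 : ZMod p) * (((i : ZMod p))⁻¹ ^ 3 * ∑ j ∈ Finset.Icc (i + 1) (p - 1), ((j : ZMod p))) =
          ((i : ZMod p))⁻¹ ^ 3 * ((∑ j ∈ Finset.Icc (i + 1) (p - 1), ((j : ZMod p))) * 2) := by
        ring
      rw [hre, hst]
      push_cast
      field_simp
      ring
    rw [Finset.sum_congr rfl h1, Finset.sum_sub_distrib, Finset.sum_neg_distrib,
      sum_inv_pow hp3 (by norm_num) (by omega)]
    have := sum_inv_pow (p := p) hp3 (m := 1) le_rfl (by omega)
    simp only [pow_one] at this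
    rw [this]
    ring
  rcases mul_eq_zero.mp h2 with h | h
  · exact absurd h (two_ne_zero' hp3)
  · exact h

lemma choose_cast_eq_one (hp3 : 3 < p) : (((p - 1).choose (p - 3) : ℕ) : ZMod p) = 1 := by
  have h5 := p_ge_5 (p := p) hp3
  have hsymm : (p - 1).choose (p - 3) = (p - 1).choose 2 := by
    have : p - 1 - 2 = p - 3 := by omega
    rw [← this, Nat.choose_symm (by omega : 2 ≤ p - 1)]
  have hodd : p % 2 = 1 := (Nat.Prime.eq_two_or_odd hp.out).resolve_left (by omega)
  have hdvd : 2 ∣ (p - 1) * (p - 2) := Dvd.dvd.mul_right (by omega : 2 ∣ (p - 1)) _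
  have hmul : (p - 1).choose 2 * 2 = (p - 1) * (p - 2) := by
    rw [Nat.choose_two_right]
    have he : p - 1 - 1 = p - 2 := by omega
    rw [he]
    exact Nat.div_mul_cancel hdvd
  have hcast := congrArg (fun t : ℕ => (t : ZMod p)) hmul
  push_cast at hcast
  rw [cast_pred_eq_neg_one] at hcast
  have hc2 : (((p - 2 : ℕ)) : ZMod p) = -2 := by
    rw [Nat.cast_sub (by omega : 2 ≤ p), ZMod.natCast_self]
    push_cast
    ring
  rw [hc2] at hcast
  rw [hsymm]
  have h2 : (((p - 1).choose 2 : ℕ) : ZMod p) * 2 = 1 * 2 := by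
    rw [hcast]; ring
  exact mul_right_cancel₀ (two_ne_zero' hp3) h2


lemma V2_eq (hp3 : 3 < p) :
    ∑ j ∈ Finset.Icc 1 (p - 1), ∑ i ∈ Finset.Ico 1 j,
      ((i : ZMod p))⁻¹ * (((j : ZMod p))⁻¹) ^ 2 = qm p ((bernoulli (p - 3) : ℚ) : ℚ_[p]) := by
  have h5 := p_ge_5 (p := p) hp3
  set β : ℕ → ZMod p := fun t => qm p ((bernoulli t : ℚ) : ℚ_[p]) with hβ
  set ch : ℕ → ZMod p := fun t => (((p - 1).choose t : ℕ) : ZMod p) with hch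
  have hstep1 : ∀ j ∈ Finset.Icc 1 (p - 1),
      ∑ i ∈ Finset.Ico 1 j, ((i : ZMod p))⁻¹ * (((j : ZMod p))⁻¹) ^ 2 =
      ∑ t ∈ Finset.range (p - 1), -(β t * ch t *
        (((j : ZMod p)) ^ (p - 1 - t) * (((j : ZMod p))⁻¹) ^ 2)) := by
    intro j hj
    obtain ⟨hj1, hj2⟩ := Finset.mem_Icc.mp hj
    rw [← Finset.sum_mul]
    have hH : ∑ i ∈ Finset.Ico 1 j, ((i : ZMod p))⁻¹ = ∑ i ∈ Finset.range j, ((i : ZMod p)) ^ (p - 2) := by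
      have hpt : ∀ i ∈ Finset.Ico 1 j, ((i : ZMod p))⁻¹ = ((i : ZMod p)) ^ (p - 2) := by
        intro i hi
        obtain ⟨hi1, hi2⟩ := Finset.mem_Ico.mp hi
        exact zmod_inv_eq_pow (zmod_ne_zero hi1 (by omega))
      rw [Finset.sum_congr rfl hpt, Finset.range_eq_Ico,
        Finset.sum_eq_sum_Ico_succ_bot (by omega : 0 < j)]
      rw [Nat.cast_zero, zero_pow (by omega : p - 2 ≠ 0), zero_add]
    rw [hH, faulhaber_mod hp3 j, neg_mul, Finset.sum_mul, ← Finset.sum_neg_distrib]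
    refine Finset.sum_congr rfl fun t _ => ?_
    ring
  rw [Finset.sum_congr rfl hstep1, Finset.sum_comm]
  have hstep2 : ∀ t ∈ Finset.range (p - 1),
      ∑ j ∈ Finset.Icc 1 (p - 1), -(β t * ch t *
        (((j : ZMod p)) ^ (p - 1 - t) * (((j : ZMod p))⁻¹) ^ 2)) =
      -(β t * ch t * (if (p - 1) ∣ (p - 1 - t) + (p - 2) * 2 then -1 else 0)) := by
    intro t ht
    have ht' := Finset.mem_range.mp ht
    rw [Finset.sum_neg_distrib, ← Finset.mul_sum]
    congr 2
    have hpt : ∀ j ∈ Finset.Icc 1 (p - 1), ((j : ZMod p)) ^ (p - 1 - t) * (((j : ZMod p))⁻¹) ^ 2 =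
        ((j : ZMod p)) ^ ((p - 1 - t) + (p - 2) * 2) := by
      intro j hj
      obtain ⟨hj1, hj2⟩ := Finset.mem_Icc.mp hj
      rw [zmod_inv_eq_pow (zmod_ne_zero hj1 (by omega)), ← pow_mul, ← pow_add]
    rw [Finset.sum_congr rfl hpt, sum_Icc_pow]
  rw [Finset.sum_congr rfl hstep2]
  rw [Finset.sum_eq_single (p - 3)]
  · have hcond : (p - 1) ∣ (p - 1 - (p - 3)) + (p - 2) * 2 := ⟨2, by omega⟩
    have hch1 : ch (p - 3) = 1 := choose_cast_eq_one hp3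
    rw [if_pos hcond, hch1]
    ring
  · intro t ht hne
    have ht' := Finset.mem_range.mp ht
    have hcond : ¬ (p - 1) ∣ (p - 1 - t) + (p - 2) * 2 := by
      intro hdvd
      obtain ⟨m, hm⟩ := hdvd
      match m with
      | 0 => omega
      | 1 => omega
      | 2 => omega
      | (m + 3) =>
        have h3 : (p - 1) * 3 ≤ (p - 1) * (m + 3) := Nat.mul_le_mul_left _ (by omega)
        rw [← hm] at h3
        omega
    rw [if_neg hcond]
    ring
  · intro habs
    exact absurd (Finset.mem_range.mpr (by omega)) habs


lemma zmod_main (hp3 : 3 < p) :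
    ∑ k ∈ Finset.Icc 1 (p - 1), (k : ZMod p) * ∑ j ∈ Finset.Icc 1 k, ∑ i ∈ Finset.Ico 1 j,
      (((i : ZMod p) * ((j : ZMod p)) ^ 3)⁻¹ + (((i : ZMod p)) ^ 3 * (j : ZMod p))⁻¹)
    = qm p ((bernoulli (p - 3) : ℚ) : ℚ_[p]) * 2⁻¹ := by
  have h5 := p_ge_5 (p := p) hp3
  set inner : ℕ → ZMod p := fun j => ∑ i ∈ Finset.Ico 1 j,
      (((i : ZMod p) * ((j : ZMod p)) ^ 3)⁻¹ + (((i : ZMod p)) ^ 3 * (j : ZMod p))⁻¹) with hinner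
  have hA : ∑ k ∈ Finset.Icc 1 (p - 1), (k : ZMod p) * ∑ j ∈ Finset.Icc 1 k, inner j =
      ∑ j ∈ Finset.Icc 1 (p - 1), (∑ k ∈ Finset.Icc j (p - 1), (k : ZMod p)) * inner j := by
    have h1 : ∀ k ∈ Finset.Icc 1 (p - 1), (k : ZMod p) * ∑ j ∈ Finset.Icc 1 k, inner j =
        ∑ j ∈ Finset.Icc 1 k, (k : ZMod p) * inner j := fun k _ => Finset.mul_sum _ _ _
    rw [Finset.sum_congr rfl h1,
      Finset.sum_comm' (t' := Finset.Icc 1 (p - 1)) (s' := fun j => Finset.Icc j (p - 1))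
        (fun x y => by simp only [Finset.mem_Icc]; omega)]
    exact Finset.sum_congr rfl fun j _ => (Finset.sum_mul _ _ _).symm
  rw [hA]
  apply mul_left_cancel₀ (two_ne_zero' (p := p) hp3)
  have hrhs : (2 : ZMod p) * (qm p ((bernoulli (p - 3) : ℚ) : ℚ_[p]) * 2⁻¹) =
      qm p ((bernoulli (p - 3) : ℚ) : ℚ_[p]) := by
    rw [mul_comm (2 : ZMod p), mul_assoc, inv_mul_cancel₀ (two_ne_zero' (p := p) hp3), mul_one]
  rw [hrhs, Finset.mul_sum]
  have hB : ∀ j ∈ Finset.Icc 1 (p - 1),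
      (2 : ZMod p) * ((∑ k ∈ Finset.Icc j (p - 1), (k : ZMod p)) * inner j) =
      ((j : ZMod p) - ((j : ZMod p)) ^ 2) * inner j := by
    intro j hj
    obtain ⟨hj1, hj2⟩ := Finset.mem_Icc.mp hj
    have hst := sum_Icc_top (p := p) (j := j) hj1 (by omega)
    calc (2 : ZMod p) * ((∑ k ∈ Finset.Icc j (p - 1), (k : ZMod p)) * inner j)
        = ((∑ k ∈ Finset.Icc j (p - 1), (k : ZMod p)) * 2) * inner j := by ring
      _ = ((j : ZMod p) - ((j : ZMod p)) ^ 2) * inner j := by rw [hst]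
  rw [Finset.sum_congr rfl hB]
  have hC : ∀ j ∈ Finset.Icc 1 (p - 1),
      ((j : ZMod p) - ((j : ZMod p)) ^ 2) * inner j =
      ∑ i ∈ Finset.Ico 1 j, ((-(((i : ZMod p))⁻¹ * ((j : ZMod p))⁻¹) +
        ((i : ZMod p))⁻¹ * (((j : ZMod p))⁻¹) ^ 2) +
        (-((((i : ZMod p))⁻¹) ^ 3 * (j : ZMod p)) + (((i : ZMod p))⁻¹) ^ 3)) := by
    intro j hj
    obtain ⟨hj1, hj2⟩ := Finset.mem_Icc.mp hj
    rw [hinner]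
    simp only
    rw [Finset.mul_sum]
    refine Finset.sum_congr rfl fun i hi => ?_
    obtain ⟨hi1, hi2⟩ := Finset.mem_Ico.mp hi
    have ha : ((i : ZMod p)) ≠ 0 := zmod_ne_zero hi1 (by omega)
    have hb : ((j : ZMod p)) ≠ 0 := zmod_ne_zero hj1 (by omega)
    have e1 : (((i : ZMod p)) * ((j : ZMod p)) ^ 3)⁻¹ = ((i : ZMod p))⁻¹ * (((j : ZMod p))⁻¹) ^ 3 := by
      rw [mul_inv, inv_pow]
    have e2 : ((((i : ZMod p)) ^ 3) * ((j : ZMod p)))⁻¹ = (((i : ZMod p))⁻¹) ^ 3 * ((j : ZMod p))⁻¹ := by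
      rw [mul_inv, inv_pow]
    rw [e1, e2]
    have hBB : ((j : ZMod p)) * ((j : ZMod p))⁻¹ = 1 := mul_inv_cancel₀ hb
    linear_combination (((i : ZMod p))⁻¹ * (((j : ZMod p))⁻¹) ^ 2 -
      ((i : ZMod p))⁻¹ * ((j : ZMod p))⁻¹ * (((j : ZMod p)) * ((j : ZMod p))⁻¹ + 1) +
      (((i : ZMod p))⁻¹) ^ 3 * (1 - ((j : ZMod p)))) * hBB
  rw [Finset.sum_congr rfl hC]
  simp only [Finset.sum_add_distrib, Finset.sum_neg_distrib]
  rw [V1_eq hp3, V2_eq hp3, V3_eq hp3, V4_eq hp3]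
  ring


lemma qm_zero : qm p (0 : ℚ_[p]) = 0 := by simpa using qm_natCast (p := p) 0

lemma qm_neg {x : ℚ_[p]} (hx : ‖x‖ ≤ 1) : qm p (-x) = - qm p x := by
  have hnx : ‖-x‖ ≤ 1 := by rwa [norm_neg]
  have h : qm p (-x) + qm p x = 0 := by
    rw [← qm_add hnx hx, neg_add_cancel, qm_zero]
  linear_combination h

lemma final_bound (hp3 : 3 < p) :
    ‖(∑ k ∈ Finset.Icc 1 (p - 1), (k : ℚ_[p]) * ∑ j ∈ Finset.Icc 1 k, ∑ i ∈ Finset.Ico 1 j,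
      (1 / ((i : ℚ_[p]) * (j : ℚ_[p]) ^ 3) + 1 / ((i : ℚ_[p]) ^ 3 * (j : ℚ_[p]))) -
      1 / 2 * ((bernoulli (p - 3) : ℚ) : ℚ_[p]))‖ ≤ (p : ℝ) ^ (-1 : ℤ) := by
  have hp5 := p_ge_5 (p := p) hp3
  have hnz : ∀ m : ℕ, 1 ≤ m → m ≤ p - 1 → ‖(m : ℚ_[p])‖ = 1 := fun m h1 h2 =>
    norm_nat_eq_one (not_dvd_of_lt h1 (by omega))
  have hn1 : ∀ i j : ℕ, 1 ≤ i → i < j → j ≤ p - 1 → ‖(i : ℚ_[p]) * (j : ℚ_[p]) ^ 3‖ = 1 := by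
    intro i j h1 h2 h3
    rw [norm_mul, norm_pow, hnz i h1 (by omega), hnz j (by omega) h3]
    norm_num
  have hn2 : ∀ i j : ℕ, 1 ≤ i → i < j → j ≤ p - 1 → ‖(i : ℚ_[p]) ^ 3 * (j : ℚ_[p])‖ = 1 := by
    intro i j h1 h2 h3
    rw [norm_mul, norm_pow, hnz i h1 (by omega), hnz j (by omega) h3]
    norm_num
  have hterm : ∀ i j : ℕ, 1 ≤ i → i < j → j ≤ p - 1 →
      ‖1 / ((i : ℚ_[p]) * (j : ℚ_[p]) ^ 3) + 1 / ((i : ℚ_[p]) ^ 3 * (j : ℚ_[p]))‖ ≤ 1 := by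
    intro i j h1 h2 h3
    have e1 : ‖1 / ((i : ℚ_[p]) * (j : ℚ_[p]) ^ 3)‖ = 1 := by
      rw [one_div, norm_inv, hn1 i j h1 h2 h3]; norm_num
    have e2 : ‖1 / ((i : ℚ_[p]) ^ 3 * (j : ℚ_[p]))‖ = 1 := by
      rw [one_div, norm_inv, hn2 i j h1 h2 h3]; norm_num
    refine le_trans (Padic.nonarchimedean _ _) ?_
    rw [e1, e2]; norm_num
  have hinner : ∀ j : ℕ, j ≤ p - 1 → ‖∑ i ∈ Finset.Ico 1 j,
      (1 / ((i : ℚ_[p]) * (j : ℚ_[p]) ^ 3) + 1 / ((i : ℚ_[p]) ^ 3 * (j : ℚ_[p])))‖ ≤ 1 := by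
    intro j hj
    refine IsUltrametricDist.norm_sum_le_of_forall_le_of_nonneg zero_le_one ?_
    intro i hi
    obtain ⟨hi1, hi2⟩ := Finset.mem_Ico.mp hi
    exact hterm i j hi1 hi2 hj
  have hmid : ∀ k : ℕ, k ≤ p - 1 → ‖∑ j ∈ Finset.Icc 1 k, ∑ i ∈ Finset.Ico 1 j,
      (1 / ((i : ℚ_[p]) * (j : ℚ_[p]) ^ 3) + 1 / ((i : ℚ_[p]) ^ 3 * (j : ℚ_[p])))‖ ≤ 1 := by
    intro k hk
    refine IsUltrametricDist.norm_sum_le_of_forall_le_of_nonneg zero_le_one ?_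
    intro j hj
    obtain ⟨hj1, hj2⟩ := Finset.mem_Icc.mp hj
    exact hinner j (by omega)
  have hkmid : ∀ k ∈ Finset.Icc 1 (p - 1), ‖(k : ℚ_[p]) * ∑ j ∈ Finset.Icc 1 k,
      ∑ i ∈ Finset.Ico 1 j,
      (1 / ((i : ℚ_[p]) * (j : ℚ_[p]) ^ 3) + 1 / ((i : ℚ_[p]) ^ 3 * (j : ℚ_[p])))‖ ≤ 1 := by
    intro k hk
    obtain ⟨hk1, hk2⟩ := Finset.mem_Icc.mp hk
    rw [norm_mul]
    exact mul_le_one₀ (norm_nat_le_one k) (norm_nonneg _) (hmid k hk2)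
  have hS : ‖∑ k ∈ Finset.Icc 1 (p - 1), (k : ℚ_[p]) * ∑ j ∈ Finset.Icc 1 k,
      ∑ i ∈ Finset.Ico 1 j,
      (1 / ((i : ℚ_[p]) * (j : ℚ_[p]) ^ 3) + 1 / ((i : ℚ_[p]) ^ 3 * (j : ℚ_[p])))‖ ≤ 1 :=
    IsUltrametricDist.norm_sum_le_of_forall_le_of_nonneg zero_le_one hkmid
  have h2norm : ‖(2 : ℚ_[p])‖ = 1 := by
    have := norm_nat_eq_one (p := p) (n := 2) (not_dvd_of_lt (by norm_num) (by omega))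
    rwa [Nat.cast_ofNat] at this
  have hhalf : ‖(1 / 2 : ℚ_[p])‖ = 1 := by rw [one_div, norm_inv, h2norm]; norm_num
  have hB : ‖((bernoulli (p - 3) : ℚ) : ℚ_[p])‖ ≤ 1 := bernoulli_norm_le _ (by omega)
  have hhB : ‖(1 / 2 : ℚ_[p]) * ((bernoulli (p - 3) : ℚ) : ℚ_[p])‖ ≤ 1 := by
    rw [norm_mul, hhalf, one_mul]; exact hB
  have hE : ‖∑ k ∈ Finset.Icc 1 (p - 1), (k : ℚ_[p]) * ∑ j ∈ Finset.Icc 1 k,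
      ∑ i ∈ Finset.Ico 1 j,
      (1 / ((i : ℚ_[p]) * (j : ℚ_[p]) ^ 3) + 1 / ((i : ℚ_[p]) ^ 3 * (j : ℚ_[p]))) -
      1 / 2 * ((bernoulli (p - 3) : ℚ) : ℚ_[p])‖ ≤ 1 := by
    rw [sub_eq_add_neg]
    refine le_trans (Padic.nonarchimedean _ _) (max_le hS ?_)
    rw [norm_neg]
    exact hhB
  -- compute qm of the expression
  have hqS : qm p (∑ k ∈ Finset.Icc 1 (p - 1), (k : ℚ_[p]) * ∑ j ∈ Finset.Icc 1 k,
      ∑ i ∈ Finset.Ico 1 j,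
      (1 / ((i : ℚ_[p]) * (j : ℚ_[p]) ^ 3) + 1 / ((i : ℚ_[p]) ^ 3 * (j : ℚ_[p])))) =
      ∑ k ∈ Finset.Icc 1 (p - 1), (k : ZMod p) * ∑ j ∈ Finset.Icc 1 k, ∑ i ∈ Finset.Ico 1 j,
      (((i : ZMod p) * ((j : ZMod p)) ^ 3)⁻¹ + (((i : ZMod p)) ^ 3 * (j : ZMod p))⁻¹) := by
    rw [qm_sum hkmid]
    refine Finset.sum_congr rfl fun k hk => ?_
    obtain ⟨hk1, hk2⟩ := Finset.mem_Icc.mp hk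
    rw [qm_mul (norm_nat_le_one k) (hmid k hk2), qm_natCast]
    congr 1
    rw [qm_sum (fun j hj => hinner j (by
      obtain ⟨hj1, hj2⟩ := Finset.mem_Icc.mp hj; omega))]
    refine Finset.sum_congr rfl fun j hj => ?_
    obtain ⟨hj1, hj2⟩ := Finset.mem_Icc.mp hj
    have hjp : j ≤ p - 1 := by omega
    rw [qm_sum (fun i hi => by
      obtain ⟨hi1, hi2⟩ := Finset.mem_Ico.mp hi
      exact hterm i j hi1 hi2 hjp)]
    refine Finset.sum_congr rfl fun i hi => ?_
    obtain ⟨hi1, hi2⟩ := Finset.mem_Ico.mp hi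
    have e1 : ‖1 / ((i : ℚ_[p]) * (j : ℚ_[p]) ^ 3)‖ ≤ 1 := by
      rw [one_div, norm_inv, hn1 i j hi1 hi2 hjp]; norm_num
    have e2 : ‖1 / ((i : ℚ_[p]) ^ 3 * (j : ℚ_[p]))‖ ≤ 1 := by
      rw [one_div, norm_inv, hn2 i j hi1 hi2 hjp]; norm_num
    rw [qm_add e1 e2, one_div, one_div, qm_inv (hn1 i j hi1 hi2 hjp), qm_inv (hn2 i j hi1 hi2 hjp)]
    congr 2
    · rw [qm_mul (norm_nat_le_one i) (by rw [norm_pow, hnz j (by omega) hjp]; norm_num),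
        qm_natCast, qm_pow (norm_nat_le_one j), qm_natCast]
    · rw [qm_mul (by rw [norm_pow, hnz i hi1 (by omega)]; norm_num) (norm_nat_le_one j),
        qm_natCast, qm_pow (norm_nat_le_one i), qm_natCast]
  have hq2 : qm p (2 : ℚ_[p]) = (2 : ZMod p) := by
    have := qm_natCast (p := p) 2
    rwa [Nat.cast_ofNat, Nat.cast_ofNat] at this
  have hqhalf : qm p (1 / 2 : ℚ_[p]) = (2 : ZMod p)⁻¹ := by
    rw [one_div, qm_inv h2norm, hq2]
  have h0 : qm p (∑ k ∈ Finset.Icc 1 (p - 1), (k : ℚ_[p]) * ∑ j ∈ Finset.Icc 1 k,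
      ∑ i ∈ Finset.Ico 1 j,
      (1 / ((i : ℚ_[p]) * (j : ℚ_[p]) ^ 3) + 1 / ((i : ℚ_[p]) ^ 3 * (j : ℚ_[p]))) -
      1 / 2 * ((bernoulli (p - 3) : ℚ) : ℚ_[p])) = 0 := by
    rw [sub_eq_add_neg, qm_add hS (by rw [norm_neg]; exact hhB), qm_neg hhB,
      qm_mul hhalf.le hB, hqS, zmod_main hp3, hqhalf]
    ring
  exact qm_zero_norm_le hE h0

end Stmt8


theorem stmt_8 (p : ℕ) [hp : Fact p.Prime] (hp3 : 3 < p) :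
    ‖((∑ k ∈ Finset.Icc 1 (p - 1), (k : ℚ) *
        ∑ j ∈ Finset.Icc 1 k, ∑ i ∈ Finset.Ico 1 j,
          (1 / ((i : ℚ) * (j : ℚ) ^ 3) + 1 / ((i : ℚ) ^ 3 * j))
        - 1 / 2 * bernoulli (p - 3) : ℚ) : ℚ_[p])‖ ≤ (p : ℝ) ^ (-1 : ℤ) := by
  have hcast : ((∑ k ∈ Finset.Icc 1 (p - 1), (k : ℚ) *
        ∑ j ∈ Finset.Icc 1 k, ∑ i ∈ Finset.Ico 1 j,
          (1 / ((i : ℚ) * (j : ℚ) ^ 3) + 1 / ((i : ℚ) ^ 3 * j))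
        - 1 / 2 * bernoulli (p - 3) : ℚ) : ℚ_[p]) =
      ∑ k ∈ Finset.Icc 1 (p - 1), (k : ℚ_[p]) * ∑ j ∈ Finset.Icc 1 k,
      ∑ i ∈ Finset.Ico 1 j,
      (1 / ((i : ℚ_[p]) * (j : ℚ_[p]) ^ 3) + 1 / ((i : ℚ_[p]) ^ 3 * (j : ℚ_[p]))) -
      1 / 2 * ((bernoulli (p - 3) : ℚ) : ℚ_[p]) := by
    push_cast
    ring
  rw [hcast]
  exact Stmt8.final_bound hp3
end
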